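/- arXiv:2410.05031 — 6 statements merged into one kernel-verified Lean document; each statement's English description precedes it below -/
import Mathlib

section
/- For all integers n ≥ 3, the Baxter numbers satisfy the recurrence (n+2)(n+3)·B_n = (7n²+7n−2)·B_{n−1} + 8(n−1)(n−2)·B_{n−2}. -/
open Finset

noncomputable def D (n k : ℕ) : ℝ :=
  if k = 0 then 0 else
    2 / (n * (n + 1) ^ 2) * (Nat.choose (n + 1) (k - 1)) *
      (Nat.choose (n + 1) k) * (Nat.choose (n + 1) (k + 1))

noncomputable def B (n : ℕ) : ℝ := if n = 0 then 1 else ∑ k ∈ Icc 1 n, D n k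

/-- Absorption identity over ℝ, valid for all `m k`. -/
lemma chooseA (m k : ℕ) :
    ((k : ℝ) + 1) * (Nat.choose m (k + 1)) = ((m : ℝ) - k) * (Nat.choose m k) := by
  rcases le_or_gt k m with hk | hk
  · have h := congrArg (Nat.cast : ℕ → ℝ) (Nat.choose_succ_right_eq m k)
    push_cast [Nat.cast_sub hk] at h
    linarith
  · rw [Nat.choose_eq_zero_of_lt hk, Nat.choose_eq_zero_of_lt (Nat.lt_succ_of_lt hk)]
    ring

/-- `(m+1) C(m,k) = (k+1) C(m+1,k+1)` over ℝ. -/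
lemma chooseB (m k : ℕ) :
    ((m : ℝ) + 1) * (Nat.choose m k) = ((k : ℝ) + 1) * (Nat.choose (m + 1) (k + 1)) := by
  have h := congrArg (Nat.cast : ℕ → ℝ) (Nat.add_one_mul_choose_eq m k)
  push_cast at h
  linarith

/-- Zeilberger certificate numerator. -/
noncomputable def Np (n k : ℝ) : ℝ :=
  8*k^6 - (36*n+24)*k^5 + (54*n^2+78*n+8)*k^4 - (28*n^3+64*n^2-8*n-24)*k^3
    - (54*n^2+78*n+16)*k^2 + (28*n^3+64*n^2+28*n)*k

/-- Certificate function `G(n, j+1)` with `n = m+3`. -/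
noncomputable def Gc (m j : ℕ) : ℝ :=
  Np ((m : ℝ) + 3) ((j : ℝ) + 1) *
      (Nat.choose (m + 4) j) * (Nat.choose (m + 4) (j + 1)) * (Nat.choose (m + 4) (j + 2)) /
    (((m : ℝ) + 2) * ((m : ℝ) + 3) ^ 3 * ((m : ℝ) + 4) ^ 3)

set_option maxHeartbeats 1000000 in
lemma key (m j : ℕ) :
    (((m:ℝ)+3) + 2) * (((m:ℝ)+3) + 3) * D (m+3) (j+1)
      - (7 * ((m:ℝ)+3) ^ 2 + 7 * ((m:ℝ)+3) - 2) * D (m+2) (j+1)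
      - 8 * ((m:ℝ)+2) * ((m:ℝ)+1) * D (m+1) (j+1)
      = Gc m (j+1) - Gc m j := by
  have hj1 : (j:ℝ) + 1 ≠ 0 := by positivity
  have hj2 : (j:ℝ) + 2 ≠ 0 := by positivity
  have hj3 : (j:ℝ) + 3 ≠ 0 := by positivity
  have hm1 : (m:ℝ) + 1 ≠ 0 := by positivity
  have hm2 : (m:ℝ) + 2 ≠ 0 := by positivity
  have hm3 : (m:ℝ) + 3 ≠ 0 := by positivity
  have hm4 : (m:ℝ) + 4 ≠ 0 := by positivity
  have ha := chooseA (m+4) j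
  have hc := chooseA (m+4) (j+1)
  have hd := chooseA (m+4) (j+2)
  have he := chooseB (m+3) j
  have hf := chooseB (m+3) (j+1)
  have hg := chooseB (m+3) (j+2)
  have hp := chooseB (m+2) j
  have hq := chooseB (m+2) (j+1)
  have hr := chooseA (m+2) (j+1)
  push_cast at ha hc hd he hf hg hp hq hr
  set u : ℝ := (Nat.choose (m+4) j : ℝ) / (((j:ℝ)+1)*((j:ℝ)+2)*((j:ℝ)+3)*((m:ℝ)+3)*((m:ℝ)+4)) with hu_def
  have hu : ((Nat.choose (m+4) j : ℕ) : ℝ)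
      = ((j:ℝ)+1)*((j:ℝ)+2)*((j:ℝ)+3)*((m:ℝ)+3)*((m:ℝ)+4) * u := by
    rw [hu_def]; field_simp
  have hBv : ((Nat.choose (m+4) (j+1) : ℕ) : ℝ)
      = ((m:ℝ)+4-j)*((j:ℝ)+2)*((j:ℝ)+3)*((m:ℝ)+3)*((m:ℝ)+4) * u := by
    refine mul_left_cancel₀ hj1 ?_
    rw [ha, hu]; push_cast; ring
  have hCv : ((Nat.choose (m+4) (j+2) : ℕ) : ℝ)
      = ((m:ℝ)+4-j)*((m:ℝ)+3-j)*((j:ℝ)+3)*((m:ℝ)+3)*((m:ℝ)+4) * u := by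
    refine mul_left_cancel₀ hj2 ?_
    have hc' : ((j:ℝ)+2) * (Nat.choose (m+4) (j+2)) = ((m:ℝ)+3-j) * (Nat.choose (m+4) (j+1)) := by
      push_cast at hc ⊢; linarith
    rw [hc', hBv]; ring
  have hDv : ((Nat.choose (m+4) (j+3) : ℕ) : ℝ)
      = ((m:ℝ)+4-j)*((m:ℝ)+3-j)*((m:ℝ)+2-j)*((m:ℝ)+3)*((m:ℝ)+4) * u := by
    refine mul_left_cancel₀ hj3 ?_
    have hd' : ((j:ℝ)+3) * (Nat.choose (m+4) (j+3)) = ((m:ℝ)+2-j) * (Nat.choose (m+4) (j+2)) := by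
      push_cast at hd ⊢; linarith
    rw [hd', hCv]; ring
  have hE : ((Nat.choose (m+3) j : ℕ) : ℝ)
      = ((m:ℝ)+4-j)*((j:ℝ)+1)*((j:ℝ)+2)*((j:ℝ)+3)*((m:ℝ)+3) * u := by
    refine mul_left_cancel₀ hm4 ?_
    have he' : ((m:ℝ)+4) * (Nat.choose (m+3) j) = ((j:ℝ)+1) * (Nat.choose (m+4) (j+1)) := by
      push_cast at he ⊢; linarith
    rw [he', hBv]; ring
  have hFv : ((Nat.choose (m+3) (j+1) : ℕ) : ℝ)
      = ((m:ℝ)+4-j)*((m:ℝ)+3-j)*((j:ℝ)+2)*((j:ℝ)+3)*((m:ℝ)+3) * u := by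
    refine mul_left_cancel₀ hm4 ?_
    have hf' : ((m:ℝ)+4) * (Nat.choose (m+3) (j+1)) = ((j:ℝ)+2) * (Nat.choose (m+4) (j+2)) := by
      push_cast at hf ⊢; linarith
    rw [hf', hCv]; ring
  have hGv : ((Nat.choose (m+3) (j+2) : ℕ) : ℝ)
      = ((m:ℝ)+4-j)*((m:ℝ)+3-j)*((m:ℝ)+2-j)*((j:ℝ)+3)*((m:ℝ)+3) * u := by
    refine mul_left_cancel₀ hm4 ?_
    have hg' : ((m:ℝ)+4) * (Nat.choose (m+3) (j+2)) = ((j:ℝ)+3) * (Nat.choose (m+4) (j+3)) := by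
      push_cast at hg ⊢; linarith
    rw [hg', hDv]; ring
  have hP : ((Nat.choose (m+2) j : ℕ) : ℝ)
      = ((m:ℝ)+4-j)*((m:ℝ)+3-j)*((j:ℝ)+1)*((j:ℝ)+2)*((j:ℝ)+3) * u := by
    refine mul_left_cancel₀ hm3 ?_
    have hp' : ((m:ℝ)+3) * (Nat.choose (m+2) j) = ((j:ℝ)+1) * (Nat.choose (m+3) (j+1)) := by
      push_cast at hp ⊢; linarith
    rw [hp', hFv]; ring
  have hQ : ((Nat.choose (m+2) (j+1) : ℕ) : ℝ)
      = ((m:ℝ)+4-j)*((m:ℝ)+3-j)*((m:ℝ)+2-j)*((j:ℝ)+2)*((j:ℝ)+3) * u := by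
    refine mul_left_cancel₀ hm3 ?_
    have hq' : ((m:ℝ)+3) * (Nat.choose (m+2) (j+1)) = ((j:ℝ)+2) * (Nat.choose (m+3) (j+2)) := by
      push_cast at hq ⊢; linarith
    rw [hq', hGv]; ring
  have hR : ((Nat.choose (m+2) (j+2) : ℕ) : ℝ)
      = ((m:ℝ)+4-j)*((m:ℝ)+3-j)*((m:ℝ)+2-j)*((m:ℝ)+1-j)*((j:ℝ)+3) * u := by
    refine mul_left_cancel₀ hj2 ?_
    have hr' : ((j:ℝ)+2) * (Nat.choose (m+2) (j+2)) = ((m:ℝ)+1-j) * (Nat.choose (m+2) (j+1)) := by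
      push_cast at hr ⊢; linarith
    rw [hr', hQ]; ring
  simp only [D, Gc, Np, if_neg (Nat.succ_ne_zero j), Nat.add_sub_cancel,
    show m+3+1 = m+4 from rfl, show m+2+1 = m+3 from rfl, show m+1+1 = m+2 from rfl,
    show j+1+1 = j+2 from rfl, show j+1+2 = j+3 from rfl]
  push_cast
  rw [hR, hQ, hP, hGv, hFv, hE, hDv, hCv, hBv, hu]
  field_simp
  ring


theorem baxter_recurrence (n : ℕ) (hn : 3 ≤ n) :
    ((n : ℝ) + 2) * ((n : ℝ) + 3) * B n
      = (7 * (n : ℝ) ^ 2 + 7 * n - 2) * B (n - 1)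
        + 8 * ((n : ℝ) - 1) * ((n : ℝ) - 2) * B (n - 2) := by
  obtain ⟨m, rfl⟩ : ∃ m, n = m + 3 := ⟨n - 3, by omega⟩
  have h1 : m + 3 - 1 = m + 2 := by omega
  have h2 : m + 3 - 2 = m + 1 := by omega
  rw [h1, h2]
  simp only [B, if_neg (by omega : m + 3 ≠ 0), if_neg (by omega : m + 2 ≠ 0),
    if_neg (by omega : m + 1 ≠ 0)]
  push_cast
  have ext1 : ∑ k ∈ Icc 1 (m+3), D (m+2) k = ∑ k ∈ Icc 1 (m+2), D (m+2) k := by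
    have e := Finset.sum_Icc_succ_top (a := 1) (b := m + 2) (by omega) (D (m+2))
    have z : D (m+2) (m+2+1) = 0 := by
      simp [D, Nat.choose_eq_zero_of_lt (by omega : m + 3 < m + 2 + 1 + 1)]
    rw [show m + 3 = m + 2 + 1 from rfl, e, z, add_zero]
  have ext2 : ∑ k ∈ Icc 1 (m+3), D (m+1) k = ∑ k ∈ Icc 1 (m+1), D (m+1) k := by
    have e1 := Finset.sum_Icc_succ_top (a := 1) (b := m + 2) (by omega) (D (m+1))
    have e2 := Finset.sum_Icc_succ_top (a := 1) (b := m + 1) (by omega) (D (m+1))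
    have z1 : D (m+1) (m+2+1) = 0 := by
      simp [D, Nat.choose_eq_zero_of_lt (by omega : m + 2 < m + 2 + 1 + 1)]
    have z2 : D (m+1) (m+1+1) = 0 := by
      simp [D, Nat.choose_eq_zero_of_lt (by omega : m + 2 < m + 1 + 1 + 1)]
    rw [show m + 3 = m + 2 + 1 from rfl, e1, z1, add_zero,
        show m + 2 = m + 1 + 1 from rfl, e2, z2, add_zero]
  rw [← ext1, ← ext2]
  have hIcc : ∀ f : ℕ → ℝ, ∑ k ∈ Icc 1 (m+3), f k = ∑ j ∈ range (m+3), f (j+1) := by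
    intro f
    rw [show Icc 1 (m+3) = Ico 1 (m+4) from (Finset.Ico_add_one_right_eq_Icc (a := 1) (b := m + 3)).symm,
        Finset.sum_Ico_eq_sum_range, show m + 4 - 1 = m + 3 by omega]
    exact Finset.sum_congr rfl fun i _ => by rw [Nat.add_comm]
  rw [hIcc, hIcc, hIcc, Finset.mul_sum, Finset.mul_sum, Finset.mul_sum]
  have hG0 : Gc m 0 = 0 := by
    unfold Gc
    have h0 : Np ((m:ℝ) + 3) (((0:ℕ):ℝ) + 1) = 0 := by unfold Np; push_cast; ring
    rw [h0]; ring
  have hGtop : Gc m (m+3) = 0 := by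
    have hz : Nat.choose (m+4) (m+3+2) = 0 := Nat.choose_eq_zero_of_lt (by omega)
    unfold Gc
    rw [hz]; push_cast; ring
  have tele : ∑ j ∈ range (m+3), (Gc m (j+1) - Gc m j) = Gc m (m+3) - Gc m 0 :=
    Finset.sum_range_sub (Gc m) (m+3)
  have sumeq : ∑ j ∈ range (m+3),
      ((((m:ℝ)+3) + 2) * (((m:ℝ)+3) + 3) * D (m+3) (j+1)
        - ((7 * ((m:ℝ)+3) ^ 2 + 7 * ((m:ℝ)+3) - 2) * D (m+2) (j+1)
          + 8 * (((m:ℝ)+3) - 1) * (((m:ℝ)+3) - 2) * D (m+1) (j+1))) = 0 := by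
    rw [show (0:ℝ) = Gc m (m+3) - Gc m 0 by rw [hG0, hGtop]; ring, ← tele]
    refine Finset.sum_congr rfl fun j _ => ?_
    have h := key m j
    have h8 : 8 * (((m:ℝ)+3) - 1) * (((m:ℝ)+3) - 2) = 8 * ((m:ℝ)+2) * ((m:ℝ)+1) := by ring
    rw [h8]
    linarith
  have expand : ∑ j ∈ range (m+3),
      ((((m:ℝ)+3) + 2) * (((m:ℝ)+3) + 3) * D (m+3) (j+1)
        - ((7 * ((m:ℝ)+3) ^ 2 + 7 * ((m:ℝ)+3) - 2) * D (m+2) (j+1)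
          + 8 * (((m:ℝ)+3) - 1) * (((m:ℝ)+3) - 2) * D (m+1) (j+1)))
      = (∑ j ∈ range (m+3), (((m:ℝ)+3) + 2) * (((m:ℝ)+3) + 3) * D (m+3) (j+1))
        - ((∑ j ∈ range (m+3), (7 * ((m:ℝ)+3) ^ 2 + 7 * ((m:ℝ)+3) - 2) * D (m+2) (j+1))
          + (∑ j ∈ range (m+3), 8 * (((m:ℝ)+3) - 1) * (((m:ℝ)+3) - 2) * D (m+1) (j+1))) := by
    rw [Finset.sum_sub_distrib, Finset.sum_add_distrib]
  linarith [sumeq, expand]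
end

section
/- For every integer n ≥ 1 and all real x, the Baxter polynomial satisfies ℬ_n(x) = x · ∑_{k=0}^{n−1} (2/((k+1)²(k+2)))·C(n−1,k)·C(n,k)·C(n+1,k)·x^k. -/
open Finset

noncomputable def Bpoly (n : ℕ) (x : ℝ) : ℝ := ∑ k ∈ range (n + 1), D n k * x ^ k

lemma D_succ_eq (n j : ℕ) (hn : 1 ≤ n) :
    D n (j + 1) = 2 / (((j : ℝ) + 1) ^ 2 * ((j : ℝ) + 2)) *
      (Nat.choose (n - 1) j) * (Nat.choose n j) * (Nat.choose (n + 1) j) := by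
  unfold D
  simp only [Nat.succ_ne_zero, if_false, Nat.add_sub_cancel]
  have h1 : ((n : ℝ) + 1) * (Nat.choose n j) = (Nat.choose (n + 1) (j + 1)) * ((j : ℝ) + 1) := by
    exact_mod_cast congrArg (Nat.cast : ℕ → ℝ) (Nat.add_one_mul_choose_eq n j)
  have hns : Nat.succ (n - 1) = n := Nat.succ_pred_eq_of_pos hn
  have h2 : (n : ℝ) * (Nat.choose (n - 1) j) = (Nat.choose n (j + 1)) * ((j : ℝ) + 1) := by
    have := congrArg (Nat.cast : ℕ → ℝ) (Nat.add_one_mul_choose_eq (n - 1) j)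
    rw [Nat.sub_add_cancel hn] at this
    have h' : Nat.succ j = j + 1 := rfl
    exact_mod_cast this
  have h3 : ((n : ℝ) + 1) * (Nat.choose n (j + 1)) =
      (Nat.choose (n + 1) (j + 2)) * ((j : ℝ) + 2) := by
    have := congrArg (Nat.cast : ℕ → ℝ) (Nat.add_one_mul_choose_eq n (j + 1))
    push_cast at this ⊢
    linarith
  have hn0 : (n : ℝ) ≠ 0 := by positivity
  have hn1 : (n : ℝ) + 1 ≠ 0 := by positivity
  have hj1 : (j : ℝ) + 1 ≠ 0 := by positivity
  have hj2 : (j : ℝ) + 2 ≠ 0 := by positivity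
  field_simp
  rw [show j + 1 + 1 = j + 2 by omega]
  linear_combination (-1*(((n+1).choose j):ℝ)*(((n+1).choose (j+2)):ℝ)*((j:ℝ)+1)*((j:ℝ)+2))*h1
    + (-1*(((n+1).choose j):ℝ)*((n:ℝ)+1)*((n.choose j):ℝ)*((j:ℝ)+1))*h3
    + (-1*(((n+1).choose j):ℝ)*((n:ℝ)+1)^2*((n.choose j):ℝ))*h2

theorem baxter_poly_form2 (n : ℕ) (hn : 1 ≤ n) (x : ℝ) :
    Bpoly n x
      = x * ∑ k ∈ range n,
          2 / (((k : ℝ) + 1) ^ 2 * ((k : ℝ) + 2)) *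
            (Nat.choose (n - 1) k) * (Nat.choose n k) * (Nat.choose (n + 1) k) * x ^ k := by
  unfold Bpoly
  rw [Finset.sum_range_succ']
  have h0 : D n 0 = 0 := by simp [D]
  rw [h0, zero_mul, add_zero, Finset.mul_sum]
  refine Finset.sum_congr rfl fun j _ => ?_
  rw [D_succ_eq n j hn]
  ring
end

section
/- For every integer n ≥ 2, every root of the Baxter polynomial ℬ_n(x) is a nonpositive real number. -/
open Finset

open Polynomial

/-- Log-derivative lemma: product over a multiset of roots. -/
lemma logDerivAux (β : ℂ) (s : Multiset ℂ) (z : ℂ)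
    (h : ∀ r ∈ s, 0 < (β * (z - r)).re) :
    Polynomial.eval z (s.map fun r => X - Polynomial.C r).prod ≠ 0 ∧
    ∃ w : ℂ, 0 ≤ w.re ∧ (s ≠ 0 → 0 < w.re) ∧
      Polynomial.eval z (Polynomial.derivative (s.map fun r => X - Polynomial.C r).prod)
        = β * w * Polynomial.eval z (s.map fun r => X - Polynomial.C r).prod := by
  induction s using Multiset.induction_on with
  | empty =>
      refine ⟨by simp, 0, by simp, fun h => absurd rfl h, by simp⟩
  | cons r s ih =>
      have hr : 0 < (β * (z - r)).re := h r (Multiset.mem_cons_self r s)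
      have hne : β * (z - r) ≠ 0 := by
        intro h0; rw [h0] at hr; simp at hr
      obtain ⟨hs0, w, hw0, hwpos, hws⟩ := ih (fun r hr => h r (Multiset.mem_cons_of_mem hr))
      have hzr : z - r ≠ 0 := fun h0 => hne (by rw [h0, mul_zero])
      simp only [Multiset.map_cons, Multiset.prod_cons]
      constructor
      · simp only [eval_mul, eval_sub, eval_X, eval_C]
        exact mul_ne_zero hzr hs0
      · refine ⟨(β * (z - r))⁻¹ + w, ?_, fun _ => ?_, ?_⟩
        · have : 0 < ((β * (z - r))⁻¹).re := by
            rw [Complex.inv_re]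
            exact div_pos hr (Complex.normSq_pos.2 hne)
          simp only [Complex.add_re]; linarith
        · have : 0 < ((β * (z - r))⁻¹).re := by
            rw [Complex.inv_re]
            exact div_pos hr (Complex.normSq_pos.2 hne)
          simp only [Complex.add_re]; linarith
        · rw [derivative_mul]
          simp only [derivative_sub, derivative_X, derivative_C, sub_zero, one_mul,
            eval_add, eval_mul, eval_sub, eval_X, eval_C, hws]
          field_simp
          rw [mul_add, mul_one_div_cancel (left_ne_zero_of_mul hne)]
          ring

/-- Half-plane Gauss–Lucas step. -/
lemma halfplane_step (β γ : ℂ) (hβ : β ≠ 0) (φ : ℂ[X])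
    (h : ∀ z ∈ φ.roots, (β * z + γ).re ≤ 0) :
    ∀ z ∈ (Polynomial.derivative φ).roots, (β * z + γ).re ≤ 0 := by
  intro z hz
  by_contra hpos
  push_neg at hpos
  have hd0 : Polynomial.derivative φ ≠ 0 := by
    intro h0; rw [h0, Polynomial.roots_zero] at hz; exact Multiset.notMem_zero z hz
  have hφ0 : φ ≠ 0 := by
    intro h0; exact hd0 (by rw [h0, derivative_zero])
  have hzφ : Polynomial.eval z φ ≠ 0 := by
    intro h0
    have : z ∈ φ.roots := (Polynomial.mem_roots hφ0).2 h0
    linarith [h z this]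
  have hsplit := (IsAlgClosed.splits φ).eq_prod_roots
  have hroots_pos : ∀ r ∈ φ.roots, 0 < (β * (z - r)).re := by
    intro r hr
    have := h r hr
    have : (β * (z - r)).re = (β * z + γ).re - (β * r + γ).re := by
      simp [mul_sub, Complex.sub_re, Complex.add_re]
    linarith [h r hr]
  obtain ⟨hs0, w, hw0, hwpos, hws⟩ := logDerivAux β φ.roots z hroots_pos
  -- φ.roots ≠ 0 : else φ is a constant and derivative = 0
  have hsne : φ.roots ≠ 0 := by
    intro h0
    rw [h0] at hsplit
    simp only [Multiset.map_zero, Multiset.prod_zero, mul_one] at hsplit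
    exact hd0 (by rw [hsplit, derivative_C])
  have hde : Polynomial.eval z (Polynomial.derivative φ) = 0 :=
    Polynomial.isRoot_of_mem_roots hz
  rw [hsplit, derivative_C_mul, eval_C_mul, hws] at hde
  have : φ.leadingCoeff ≠ 0 := Polynomial.leadingCoeff_ne_zero.2 hφ0
  have hw : w ≠ 0 := by
    intro h0; rw [h0] at hwpos; simpa using hwpos hsne
  exact (mul_ne_zero this (mul_ne_zero (mul_ne_zero hβ hw) hs0)) (by rw [← mul_assoc] at hde ⊢; exact hde)

lemma halfplane_iter (β γ : ℂ) (hβ : β ≠ 0) (φ : ℂ[X])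
    (h : ∀ z ∈ φ.roots, (β * z + γ).re ≤ 0) (j : ℕ) :
    ∀ z ∈ (Polynomial.derivative^[j] φ).roots, (β * z + γ).re ≤ 0 := by
  induction j with
  | zero => simpa using h
  | succ j ih =>
      rw [Function.iterate_succ_apply']
      exact halfplane_step β γ hβ _ ih

/-- Key lemma: the binomial-shift transform of a polynomial with real roots in
`(-∞, -ρ]` has no nonreal roots. -/
lemma key_lemma (m : ℕ) (hm : 1 ≤ m) (A : ℂ[X]) (hA : 1 ≤ A.natDegree)
    (ρ : ℝ) (hρ : 0 < ρ)
    (hroots : ∀ z ∈ A.roots, z.im = 0 ∧ z.re ≤ -ρ)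
    (x0 : ℂ) (him : x0.im ≠ 0)
    (hx0 : ∑ k ∈ range (m + 1), (m.choose k : ℂ) * A.coeff (k + 1) * x0 ^ k = 0) :
    False := by
  have hA0 : A ≠ 0 := by
    intro h0; rw [h0, Polynomial.natDegree_zero] at hA; omega
  set B : ℂ[X] := (X + Polynomial.C x0) ^ m with hB
  have hBmonic : B.Monic := (monic_X_add_C x0).pow m
  have hB0 : B ≠ 0 := hBmonic.ne_zero
  set φ : ℂ[X] := A * B with hφ
  have hφ0 : φ ≠ 0 := mul_ne_zero hA0 hB0
  -- the half-plane data
  set t : ℝ := (x0.re - ρ) / x0.im with ht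
  set β : ℂ := 1 + (t : ℂ) * Complex.I with hβdef
  have hβre : β.re = 1 := by simp [hβdef]
  have hβim : β.im = t := by simp [hβdef]
  have hβ : β ≠ 0 := by
    intro h0
    have : β.re = 0 := by rw [h0]; simp
    rw [hβre] at this; norm_num at this
  -- roots of φ lie in the half-plane
  have hφroots : ∀ z ∈ φ.roots, (β * z + (ρ : ℂ)).re ≤ 0 := by
    intro z hz
    rw [hφ, Polynomial.roots_mul hφ0, hB, Polynomial.roots_pow] at hz
    rcases Multiset.mem_add.1 hz with hz | hz
    · obtain ⟨him0, hre⟩ := hroots z hz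
      have : (β * z + (ρ : ℂ)).re = z.re + ρ := by
        simp [Complex.add_re, Complex.mul_re, hβre, hβim, him0]
      rw [this]; linarith
    · have hzx : z = -x0 := by
        have : z ∈ (X + Polynomial.C x0).roots := Multiset.mem_of_mem_nsmul hz
        have h2 : (X + Polynomial.C x0) = X - Polynomial.C (-x0) := by
          rw [map_neg, sub_neg_eq_add]
        rw [h2, Polynomial.roots_X_sub_C] at this
        exact Multiset.mem_singleton.1 this
      have : (β * z + (ρ : ℂ)).re = -x0.re + t * x0.im + ρ := by
        rw [hzx]; simp [Complex.add_re, Complex.mul_re, hβre, hβim]; ring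
      have htim : t * x0.im = x0.re - ρ := div_mul_cancel₀ _ him
      rw [this]; linarith
  -- apply iterated Gauss-Lucas
  have hiter := halfplane_iter β (ρ : ℂ) hβ φ hφroots (m + 1)
  -- 0 is a root of the (m+1)-st derivative of φ
  have hcoeff : φ.coeff (m + 1) = 0 := by
    rw [hφ, Polynomial.coeff_mul, Finset.Nat.sum_antidiagonal_eq_sum_range_succ_mk]
    rw [Finset.sum_range_succ']
    have hBdeg : B.natDegree = m := by
      rw [hB, Polynomial.natDegree_pow, Polynomial.natDegree_X_add_C, mul_one]
    have h0term : A.coeff 0 * B.coeff (m + 1 - 0) = 0 := by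
      have : B.coeff (m + 1) = 0 :=
        Polynomial.coeff_eq_zero_of_natDegree_lt (by omega)
      simp [this]
    rw [h0term, add_zero, ← hx0]
    apply Finset.sum_congr rfl
    intro k hk
    have hk' : k ≤ m := by
      simp only [Finset.mem_range] at hk; omega
    have : m + 1 - (k + 1) = m - k := by omega
    rw [this, hB, Polynomial.coeff_X_add_C_pow]
    have h1 : m - (m - k) = k := by omega
    have h2 : m.choose (m - k) = m.choose k := Nat.choose_symm hk'
    rw [h1, h2]
    ring
  have hφdeg : φ.natDegree = A.natDegree + m := by
    rw [hφ, Polynomial.natDegree_mul hA0 hB0, hB, Polynomial.natDegree_pow,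
      Polynomial.natDegree_X_add_C, mul_one]
  have hdne : Polynomial.derivative^[m + 1] φ ≠ 0 := by
    intro h0
    have hc : (Polynomial.derivative^[m + 1] φ).coeff (A.natDegree - 1) = 0 := by
      rw [h0]; simp
    have he : A.natDegree - 1 + (m + 1) = A.natDegree + m := by omega
    rw [Polynomial.coeff_iterate_derivative, he, ← hφdeg] at hc
    have hlc : φ.coeff φ.natDegree ≠ 0 := by
      rw [← Polynomial.leadingCoeff]
      exact Polynomial.leadingCoeff_ne_zero.2 hφ0
    have hdesc : (φ.natDegree).descFactorial (m + 1) ≠ 0 := by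
      rw [Ne, Nat.descFactorial_eq_zero_iff_lt, not_lt, hφdeg]
      omega
    rw [smul_eq_zero] at hc
    rcases hc with hc | hc
    · exact hdesc hc
    · exact hlc hc
  have h0root : (0 : ℂ) ∈ (Polynomial.derivative^[m + 1] φ).roots := by
    rw [Polynomial.mem_roots hdne]
    rw [Polynomial.IsRoot, ← Polynomial.coeff_zero_eq_eval_zero,
      Polynomial.coeff_iterate_derivative, zero_add, hcoeff, smul_zero]
  have := hiter 0 h0root
  rw [mul_zero, zero_add, Complex.ofReal_re] at this
  linarith

lemma exists_rho (s : Multiset ℂ) (h : ∀ z ∈ s, z.re < 0) :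
    ∃ ρ : ℝ, 0 < ρ ∧ ∀ z ∈ s, z.re ≤ -ρ := by
  induction s using Multiset.induction_on with
  | empty => exact ⟨1, one_pos, fun z hz => absurd hz (Multiset.notMem_zero z)⟩
  | cons a s ih =>
      obtain ⟨ρ, hρ, hs⟩ := ih (fun z hz => h z (Multiset.mem_cons_of_mem hz))
      have ha : a.re < 0 := h a (Multiset.mem_cons_self a s)
      refine ⟨min ρ (-a.re), lt_min hρ (by linarith), fun z hz => ?_⟩
      rcases Multiset.mem_cons.1 hz with h' | hz
      · have := min_le_right ρ (-a.re); rw [h']; linarith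
      · have := hs z hz; have := min_le_left ρ (-a.re); linarith

lemma sum_cast_ne_zero (N : ℕ) (f : ℕ → ℕ) (h0 : 0 < f 0) (x : ℝ) (hx : 0 ≤ x) :
    (∑ k ∈ range (N + 1), (f k : ℂ) * (x : ℂ) ^ k) ≠ 0 := by
  have hcast : (∑ k ∈ range (N + 1), (f k : ℂ) * (x : ℂ) ^ k)
      = ((∑ k ∈ range (N + 1), (f k : ℝ) * x ^ k : ℝ) : ℂ) := by
    push_cast; ring
  rw [hcast]
  have hpos : 0 < ∑ k ∈ range (N + 1), (f k : ℝ) * x ^ k := by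
    have hle : (f 0 : ℝ) * x ^ 0 ≤ ∑ k ∈ range (N + 1), (f k : ℝ) * x ^ k := by
      apply Finset.single_le_sum (f := fun k => (f k : ℝ) * x ^ k)
      · intro i _; positivity
      · simp
    simp only [pow_zero, mul_one] at hle
    have : (0 : ℝ) < f 0 := by exact_mod_cast h0
    linarith
  exact_mod_cast ne_of_gt hpos

noncomputable def pairP (m : ℕ) : ℂ[X] :=
  ∑ k ∈ range (m + 1), Polynomial.monomial k ((m.choose k : ℂ) * (m.choose (k + 1) : ℂ))

lemma pairP_coeff (m j : ℕ) :
    (pairP m).coeff j = (m.choose j : ℂ) * (m.choose (j + 1) : ℂ) := by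
  rw [pairP, Polynomial.finset_sum_coeff]
  simp only [Polynomial.coeff_monomial]
  rw [Finset.sum_ite_eq' (range (m + 1)) j]
  by_cases hj : j ∈ range (m + 1)
  · rw [if_pos hj]
  · rw [if_neg hj]
    simp only [Finset.mem_range, not_lt] at hj
    rw [Nat.choose_eq_zero_of_lt (by omega)]
    simp

lemma pairP_eval (m : ℕ) (x : ℂ) :
    (pairP m).eval x = ∑ k ∈ range (m + 1), (m.choose k : ℂ) * (m.choose (k + 1) : ℂ) * x ^ k := by
  rw [pairP, Polynomial.eval_finset_sum]
  simp [Polynomial.eval_monomial]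

/-- Stage 1: roots of the Narayana-type polynomial are real. -/
lemma stage1 (m : ℕ) (hm : 1 ≤ m) (x0 : ℂ)
    (h : ∑ k ∈ range (m + 1), (m.choose k : ℂ) * (m.choose (k + 1) : ℂ) * x0 ^ k = 0) :
    x0.im = 0 := by
  by_contra him
  apply key_lemma m hm ((X + Polynomial.C (1 : ℂ)) ^ m) ?_ 1 one_pos ?_ x0 him ?_
  · rw [Polynomial.natDegree_pow, Polynomial.natDegree_X_add_C, mul_one]; exact hm
  · intro z hz
    rw [Polynomial.roots_pow] at hz
    have : z ∈ (X + Polynomial.C (1 : ℂ)).roots := Multiset.mem_of_mem_nsmul hz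
    have h2 : (X + Polynomial.C (1 : ℂ)) = X - Polynomial.C (-1) := by
      rw [map_neg, sub_neg_eq_add]
    rw [h2, Polynomial.roots_X_sub_C] at this
    have hz1 : z = -1 := Multiset.mem_singleton.1 this
    rw [hz1]; norm_num
  · rw [← h]
    apply Finset.sum_congr rfl
    intro k hk
    rw [Polynomial.coeff_X_add_C_pow, one_pow, one_mul]

/-- Stage 2: roots of the Baxter-type (triple binomial) polynomial are real. -/
lemma stage2 (m : ℕ) (hm : 3 ≤ m) (x0 : ℂ)
    (h : ∑ k ∈ range (m + 1),
        (m.choose k : ℂ) * ((m.choose (k + 1) : ℂ) * (m.choose (k + 2) : ℂ)) * x0 ^ k = 0) :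
    x0.im = 0 := by
  by_contra him
  -- pairP m is nonzero with natDegree ≥ 1
  have hcoeffm1 : (pairP m).coeff (m - 1) ≠ 0 := by
    rw [pairP_coeff]
    have h1 : m - 1 + 1 = m := by omega
    rw [h1]
    simp only [Nat.choose_self, Nat.cast_one, mul_one, ne_eq, Nat.cast_eq_zero]
    intro hc
    rw [Nat.choose_eq_zero_iff] at hc
    omega
  have hP0 : pairP m ≠ 0 := fun h0 => hcoeffm1 (by rw [h0]; simp)
  have hPdeg : 1 ≤ (pairP m).natDegree := by
    have := Polynomial.le_natDegree_of_ne_zero hcoeffm1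
    omega
  -- all roots of pairP are real and negative
  have hrootsneg : ∀ z ∈ (pairP m).roots, z.im = 0 ∧ z.re < 0 := by
    intro z hz
    have heval : (pairP m).eval z = 0 := Polynomial.isRoot_of_mem_roots hz
    rw [pairP_eval] at heval
    have him0 : z.im = 0 := stage1 m (by omega) z heval
    refine ⟨him0, ?_⟩
    by_contra hre
    push_neg at hre
    have hzre : z = ((z.re : ℝ) : ℂ) := Complex.ext rfl (by simp [him0])
    rw [hzre] at heval
    exact sum_cast_ne_zero m (fun k => m.choose k * m.choose (k + 1))
      (by simp; omega) z.re hre (by push_cast at heval ⊢; convert heval using 2 <;> ring_nf) 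
  obtain ⟨ρ, hρ, hrho⟩ := exists_rho (pairP m).roots (fun z hz => (hrootsneg z hz).2)
  apply key_lemma m (by omega) (pairP m) hPdeg ρ hρ
    (fun z hz => ⟨(hrootsneg z hz).1, hrho z hz⟩) x0 him
  rw [← h]
  apply Finset.sum_congr rfl
  intro k _
  rw [pairP_coeff]


theorem baxter_poly_roots_nonpos_real (n : ℕ) (hn : 2 ≤ n) (z : ℂ)
    (hz : ∑ k ∈ range (n + 1), (D n k : ℂ) * z ^ k = 0) :
    ∃ r : ℝ, r ≤ 0 ∧ z = (r : ℂ) := by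
  set m : ℕ := n + 1 with hm
  set c : ℝ := 2 / (n * (n + 1) ^ 2) with hc
  have hcpos : 0 < c := by
    rw [hc]
    have : (0 : ℝ) < n := by exact_mod_cast (by omega : 0 < n)
    positivity
  -- rewrite the sum
  have hsum : ∑ k ∈ range (n + 1), (D n k : ℂ) * z ^ k
      = (c : ℂ) * z * ∑ k ∈ range n,
          (m.choose k : ℂ) * ((m.choose (k + 1) : ℂ) * (m.choose (k + 2) : ℂ)) * z ^ k := by
    rw [Finset.sum_range_succ']
    have h0 : (D n 0 : ℂ) * z ^ 0 = 0 := by simp [D]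
    rw [h0, add_zero, Finset.mul_sum]
    apply Finset.sum_congr rfl
    intro k _
    have hD : D n (k + 1) = c * (m.choose k) * (m.choose (k + 1)) * (m.choose (k + 2)) := by
      rw [D]
      simp only [Nat.add_sub_cancel, if_neg (Nat.succ_ne_zero k)]
      rfl
    rw [hD]
    push_cast
    ring
  rw [hsum] at hz
  have hc0 : (c : ℂ) ≠ 0 := by
    exact_mod_cast ne_of_gt hcpos
  rcases mul_eq_zero.1 hz with hz1 | hS
  · rcases mul_eq_zero.1 hz1 with hc1 | hz0
    · exact absurd hc1 hc0
    · exact ⟨0, le_refl 0, by rw [hz0]; simp⟩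
  · -- extend the sum to range (m+1)
    have hext : ∑ k ∈ range (m + 1),
        (m.choose k : ℂ) * ((m.choose (k + 1) : ℂ) * (m.choose (k + 2) : ℂ)) * z ^ k
        = ∑ k ∈ range n,
        (m.choose k : ℂ) * ((m.choose (k + 1) : ℂ) * (m.choose (k + 2) : ℂ)) * z ^ k := by
      symm
      apply Finset.sum_subset
      · intro k hk; simp only [Finset.mem_range] at hk ⊢; omega
      · intro k _ hk
        simp only [Finset.mem_range, not_lt] at hk
        rw [Nat.choose_eq_zero_of_lt (show m < k + 2 by omega)]
        simp
    have hS' : ∑ k ∈ range (m + 1),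
        (m.choose k : ℂ) * ((m.choose (k + 1) : ℂ) * (m.choose (k + 2) : ℂ)) * z ^ k = 0 := by
      rw [hext, hS]
    have him : z.im = 0 := stage2 m (by omega) z hS'
    have hzre : z = ((z.re : ℝ) : ℂ) := Complex.ext rfl (by simp [him])
    refine ⟨z.re, ?_, hzre⟩
    · by_contra hre
      push_neg at hre
      rw [hzre] at hS'
      exact sum_cast_ne_zero m (fun k => m.choose k * (m.choose (k + 1) * m.choose (k + 2)))
        (by simp only [Nat.choose_zero_right, one_mul]
            have h1 : 0 < m.choose 1 := Nat.choose_pos (by omega)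
            have h2 : 0 < m.choose 2 := Nat.choose_pos (by omega)
            positivity) z.re (le_of_lt hre)
        (by push_cast at hS' ⊢; convert hS' using 2)
end

section
/- For all integers n ≥ 2 and all real x, the Baxter polynomials satisfy the differential-recurrence identity (n+3)(n+4)·ℬ_{n+1}(x) = ((10n²+25n+12)x + n²+4n)·ℬ_n(x) − 3x(5nx+4x−n−4)·ℬ_n'(x) + 6x²(x+1)·ℬ_n''(x). -/
open Finset

lemma D_zero (n : ℕ) : D n 0 = 0 := by simp [D]

lemma D_top (n k : ℕ) (h : n + 1 ≤ k) : D n k = 0 := by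
  have : (n+1).choose (k+1) = 0 := Nat.choose_eq_zero_of_lt (by omega)
  simp [D, this]

lemma rel (n j : ℕ) : ((j:ℝ)+1) * ((n+1).choose (j+1) : ℝ)
    = ((n:ℝ)+1-j) * ((n+1).choose j : ℝ) := by
  rcases le_or_gt j (n+1) with h | h
  · have h1 := Nat.choose_succ_right_eq (n+1) j
    have h2 := congrArg (Nat.cast (R := ℝ)) h1
    push_cast [Nat.cast_sub h] at h2
    linarith
  · have h1 : (n+1).choose j = 0 := Nat.choose_eq_zero_of_lt h
    have h2 : (n+1).choose (j+1) = 0 := Nat.choose_eq_zero_of_lt (by omega)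
    simp [h1, h2]

lemma key_poly (n i a b c d : ℝ) (hn : n ≠ 0) (hn1 : n+1 ≠ 0) (hn2 : n+2 ≠ 0)
    (hi1 : i+1 ≠ 0) (hi2 : i+2 ≠ 0) (hi3 : i+3 ≠ 0)
    (hb : (i+1)*b = (n+1-i)*a) (hc : (i+2)*c = (n-i)*b) (hd : (i+3)*d = (n-1-i)*c) :
    (n+3)*(n+4) * (2/((n+1)*(n+2)^2) * (a+b) * (b+c) * (c+d))
      = (n^2+4*n + 3*(n+4)*(i+2) + 6*(i+2)*((i+2)-1)) * (2/(n*(n+1)^2) * b * c * d)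
        + (10*n^2+25*n+12 - (15*n+12)*(i+1) + 6*(i+1)*((i+1)-1)) * (2/(n*(n+1)^2) * a * b * c) := by
  have hd' : d = (n-1-i)*c/(i+3) := by field_simp; linarith
  subst hd'
  have hc' : c = (n-i)*b/(i+2) := by field_simp; linarith
  subst hc'
  have hb' : b = (n+1-i)*a/(i+1) := by field_simp; linarith
  subst hb'
  field_simp
  ring

noncomputable def fc (n j : ℕ) : ℝ :=
  (10*(n:ℝ)^2+25*(n:ℝ)+12 - (15*(n:ℝ)+12)*(j:ℝ) + 6*(j:ℝ)*((j:ℝ)-1)) * D n j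

noncomputable def Rc (n k : ℕ) : ℝ :=
  ((n:ℝ)^2+4*(n:ℝ) + 3*((n:ℝ)+4)*(k:ℝ) + 6*(k:ℝ)*((k:ℝ)-1)) * D n k + fc n (k-1)

lemma key_s8 (n : ℕ) (hn : 2 ≤ n) (k : ℕ) :
    ((n:ℝ)+3)*((n:ℝ)+4) * D (n+1) k = Rc n k := by
  have hn0 : (n:ℝ) ≠ 0 := by
    have : (0:ℝ) < n := by exact_mod_cast lt_of_lt_of_le (by norm_num) hn
    linarith
  have hn1 : (n:ℝ)+1 ≠ 0 := by positivity
  have hn2 : (n:ℝ)+2 ≠ 0 := by positivity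
  match k with
  | 0 => simp [Rc, fc, D_zero]
  | 1 =>
      have hp : ((n+2).choose 2 : ℝ) = (n+1).choose 1 + (n+1).choose 2 := by
        rw [Nat.choose_succ_succ (n+1) 1]; push_cast; ring
      have hc := rel n 1
      have hc2 : ((n+1).choose 2 : ℝ) = n*(n+1)/2 := by
        rw [Nat.choose_one_right] at hc
        push_cast at hc
        field_simp
        linarith
      simp only [Rc, fc, D, if_neg (one_ne_zero), Nat.sub_self, D_zero]
      norm_num [Nat.choose_one_right, hp, hc2]
      field_simp
      ring
  | (i+2) =>
      have hi1 : (i:ℝ)+1 ≠ 0 := by positivity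
      have hi2 : (i:ℝ)+2 ≠ 0 := by positivity
      have hi3 : (i:ℝ)+3 ≠ 0 := by positivity
      have hb := rel n i
      have hc := rel n (i+1)
      have hd := rel n (i+2)
      push_cast at hb hc hd
      have hp1 : ((n+2).choose (i+1) : ℝ) = (n+1).choose i + (n+1).choose (i+1) := by
        rw [Nat.choose_succ_succ (n+1) i]; push_cast; ring
      have hp2 : ((n+2).choose (i+2) : ℝ) = (n+1).choose (i+1) + (n+1).choose (i+2) := by
        rw [Nat.choose_succ_succ (n+1) (i+1)]; push_cast; ring
      have hp3 : ((n+2).choose (i+3) : ℝ) = (n+1).choose (i+2) + (n+1).choose (i+3) := by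
        rw [Nat.choose_succ_succ (n+1) (i+2)]; push_cast; ring
      have h2 : i+2 ≠ 0 := by omega
      simp only [Rc, fc, D, if_neg h2, Nat.add_sub_cancel]
      push_cast
      rw [hp1, hp2, hp3]
      have := key_poly (n:ℝ) (i:ℝ) ((n+1).choose i : ℝ) ((n+1).choose (i+1) : ℝ)
        ((n+1).choose (i+2) : ℝ) ((n+1).choose (i+3) : ℝ) hn0 hn1 hn2 hi1 hi2 hi3
        (by linarith) (by linarith) (by linarith)
      linear_combination this


theorem baxter_diff_recurrence (n : ℕ) (hn : 2 ≤ n) (x : ℝ) :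
    ((n : ℝ) + 3) * ((n : ℝ) + 4) * Bpoly (n + 1) x
      = ((10 * (n : ℝ) ^ 2 + 25 * n + 12) * x + (n : ℝ) ^ 2 + 4 * n) * Bpoly n x
        - 3 * x * (5 * (n : ℝ) * x + 4 * x - n - 4) * deriv (Bpoly n) x
        + 6 * x ^ 2 * (x + 1) * deriv (deriv (Bpoly n)) x := by
  have hd1 : deriv (Bpoly n) = fun y : ℝ => ∑ k ∈ range (n+1), D n k * ((k:ℝ) * y^(k-1)) := by
    funext y
    exact (HasDerivAt.fun_sum fun k _ => (hasDerivAt_pow k y).const_mul (D n k)).deriv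
  have hdd : deriv (deriv (Bpoly n)) x
      = ∑ k ∈ range (n+1), (D n k * (k:ℝ)) * ((((k-1):ℕ):ℝ) * x^(k-1-1)) := by
    rw [hd1]
    exact (HasDerivAt.fun_sum fun k _ => by
      simpa [mul_assoc] using (hasDerivAt_pow (k-1) x).const_mul (D n k * (k:ℝ))).deriv
  have pad : ∀ f : ℕ → ℝ, (∀ k, n+1 ≤ k → f k = 0) →
      ∑ k ∈ range (n+1), f k = ∑ k ∈ range (n+2), f k := by
    intro f hf
    apply Finset.sum_subset (range_subset_range.2 (by omega))
    intro k hk hnk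
    apply hf
    simp only [mem_range] at hk hnk
    omega
  have S0e : Bpoly n x = ∑ k ∈ range (n+2), D n k * x^k := by
    rw [Bpoly]
    exact pad _ (fun k hk => by rw [D_top n k hk]; ring)
  have S1e : x * deriv (Bpoly n) x = ∑ k ∈ range (n+2), (k:ℝ) * D n k * x^k := by
    rw [hd1]
    rw [Finset.mul_sum]
    calc ∑ k ∈ range (n+1), x * (D n k * ((k:ℝ) * x^(k-1)))
        = ∑ k ∈ range (n+1), (k:ℝ) * D n k * x^k := by
          refine sum_congr rfl fun k _ => ?_
          match k with
          | 0 => simp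
          | (i+1) =>
            push_cast [Nat.add_sub_cancel]
            rw [pow_succ]
            ring
      _ = _ := pad _ (fun k hk => by rw [D_top n k hk]; ring)
  have S2e : x^2 * deriv (deriv (Bpoly n)) x
      = ∑ k ∈ range (n+2), (k:ℝ) * ((k:ℝ)-1) * D n k * x^k := by
    rw [hdd, Finset.mul_sum]
    calc ∑ k ∈ range (n+1), x^2 * ((D n k * (k:ℝ)) * ((((k-1):ℕ):ℝ) * x^(k-1-1)))
        = ∑ k ∈ range (n+1), (k:ℝ) * ((k:ℝ)-1) * D n k * x^k := by
          refine sum_congr rfl fun k _ => ?_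
          match k with
          | 0 => simp
          | 1 => simp
          | (i+2) =>
            have e1 : i+2-1 = i+1 := rfl
            have e2 : i+1-1 = i := rfl
            rw [e1, e2]
            push_cast
            rw [pow_succ, pow_succ]
            ring
      _ = _ := pad _ (fun k hk => by rw [D_top n k hk]; ring)
  have shift : ∀ f : ℕ → ℝ, f 0 = 0 → (∀ k, n+1 ≤ k → f k = 0) →
      x * ∑ k ∈ range (n+2), f k * x^k = ∑ k ∈ range (n+2), f (k-1) * x^k := by
    intro f h0 htop
    calc x * ∑ k ∈ range (n+2), f k * x^k
        = ∑ k ∈ range (n+2), f k * x^(k+1) := by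
          rw [Finset.mul_sum]
          exact sum_congr rfl fun k _ => by rw [pow_succ]; ring
      _ = ∑ k ∈ range (n+1), f k * x^(k+1) := by
          rw [Finset.sum_range_succ, htop (n+1) le_rfl]
          ring
      _ = ∑ k ∈ range (n+2), f (k-1) * x^k := by
          rw [Finset.sum_range_succ' (fun k => f (k-1) * x^k) (n+1)]
          simp [h0]
  have hshift : x * ∑ k ∈ range (n+2), fc n k * x^k = ∑ k ∈ range (n+2), fc n (k-1) * x^k :=
    shift (fc n) (by simp [fc, D_zero]) (fun k hk => by simp [fc, D_top n k hk])
  have hA : ∑ k ∈ range (n+2), ((n:ℝ)^2+4*(n:ℝ) + 3*((n:ℝ)+4)*(k:ℝ) + 6*(k:ℝ)*((k:ℝ)-1)) * D n k * x^k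
      = ((n:ℝ)^2+4*(n:ℝ)) * (∑ k ∈ range (n+2), D n k * x^k)
        + 3*((n:ℝ)+4) * (∑ k ∈ range (n+2), (k:ℝ) * D n k * x^k)
        + 6 * (∑ k ∈ range (n+2), (k:ℝ) * ((k:ℝ)-1) * D n k * x^k) := by
    rw [Finset.mul_sum, Finset.mul_sum, Finset.mul_sum, ← Finset.sum_add_distrib,
      ← Finset.sum_add_distrib]
    exact sum_congr rfl fun k _ => by ring
  have hF : ∑ k ∈ range (n+2), fc n k * x^k
      = (10*(n:ℝ)^2+25*(n:ℝ)+12) * (∑ k ∈ range (n+2), D n k * x^k)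
        - (15*(n:ℝ)+12) * (∑ k ∈ range (n+2), (k:ℝ) * D n k * x^k)
        + 6 * (∑ k ∈ range (n+2), (k:ℝ) * ((k:ℝ)-1) * D n k * x^k) := by
    rw [Finset.mul_sum, Finset.mul_sum, Finset.mul_sum, ← Finset.sum_sub_distrib,
      ← Finset.sum_add_distrib]
    exact sum_congr rfl fun k _ => by rw [fc]; ring
  have hB1 : Bpoly (n+1) x = ∑ k ∈ range (n+2), D (n+1) k * x^k := by
    rw [Bpoly]
  calc ((n : ℝ) + 3) * ((n : ℝ) + 4) * Bpoly (n + 1) x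
      = ∑ k ∈ range (n+2), ((n:ℝ)+3)*((n:ℝ)+4) * D (n+1) k * x^k := by
        rw [hB1, Finset.mul_sum]
        exact sum_congr rfl fun k _ => by ring
    _ = ∑ k ∈ range (n+2), Rc n k * x^k := sum_congr rfl fun k _ => by rw [key_s8 n hn k]
    _ = (∑ k ∈ range (n+2), ((n:ℝ)^2+4*(n:ℝ) + 3*((n:ℝ)+4)*(k:ℝ) + 6*(k:ℝ)*((k:ℝ)-1)) * D n k * x^k)
          + ∑ k ∈ range (n+2), fc n (k-1) * x^k := by
        rw [← Finset.sum_add_distrib]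
        exact sum_congr rfl fun k _ => by rw [Rc]; ring
    _ = _ := by
        rw [hA, ← hshift, hF]
        linear_combination (-((10*(n:ℝ)^2+25*(n:ℝ)+12)*x + (n:ℝ)^2+4*(n:ℝ))) * S0e
          + ((15*(n:ℝ)+12)*x - 3*((n:ℝ)+4)) * S1e + (-(6*x+6)) * S2e
end

section
/- Let g_n = ∑_{k=0}^{n} k·D_{n,k}, where D_{n,k} = (2/(n(n+1)²))·C(n+1,k−1)·C(n+1,k)·C(n+1,k+1). Then g_{n+1}/g_n converges to 8 as n → ∞. -/
set_option maxHeartbeats 1600000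

open Finset

noncomputable def g (n : ℕ) : ℝ := ∑ k ∈ range (n + 1), (k : ℝ) * D n k

namespace BX

noncomputable def b (m j : ℕ) : ℝ := (Nat.choose m j : ℝ)

lemma b_nonneg (m j : ℕ) : 0 ≤ b m j := Nat.cast_nonneg _

noncomputable def K (m : ℕ) : ℝ := b m (m / 2)

lemma b_le_K (m j : ℕ) : b m j ≤ K m := by
  exact_mod_cast Nat.cast_le.mpr (Nat.choose_le_middle j m)

lemma K_pos (m : ℕ) : 0 < K m := by
  have := Nat.choose_pos (Nat.div_le_self m 2)
  unfold K b; exact_mod_cast this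

-- monotonicity
lemma b_le_succ {m k : ℕ} (h : 2*k+1 ≤ m) : b m k ≤ b m (k+1) := by
  have e := Nat.choose_succ_right_eq m k
  have h1 : k + 1 ≤ m - k := by omega
  have : Nat.choose m k * (k+1) ≤ Nat.choose m (k+1) * (k+1) := by
    rw [e]; exact Nat.mul_le_mul_left _ h1
  have := Nat.le_of_mul_le_mul_right this (Nat.succ_pos k)
  unfold b; exact_mod_cast this

lemma b_succ_le {m k : ℕ} (h : m ≤ 2*k+1) : b m (k+1) ≤ b m k := by
  have e := Nat.choose_succ_right_eq m k
  have h1 : m - k ≤ k + 1 := by omega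
  have : Nat.choose m (k+1) * (k+1) ≤ Nat.choose m k * (k+1) := by
    rw [e]; exact Nat.mul_le_mul_left _ h1
  have := Nat.le_of_mul_le_mul_right this (Nat.succ_pos k)
  unfold b; exact_mod_cast this

-- telescoping over Ico
lemma tele (f : ℕ → ℝ) (a c : ℕ) (h : a ≤ c) :
    ∑ j ∈ Ico a c, (f j - f (j+1)) = f a - f c := by
  rw [Finset.sum_Ico_eq_sum_range]
  have := Finset.sum_range_sub' (fun i => f (a + i)) (c - a)
  rw [show (∑ k ∈ range (c-a), (f (a+k) - f (a+k+1))) = ∑ i ∈ range (c-a), (f (a+i) - f (a+(i+1))) from sum_congr rfl (fun i _ => by rw [Nat.add_assoc]), this]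
  congr 2 <;> omega


lemma key (m q L : ℕ) (B : ℕ → ℝ) (M : ℝ) (hM : 0 ≤ M)
    (h0 : ∀ j, 0 ≤ B j) (h1 : ∀ j, B j ≤ M) :
    |∑ j ∈ range L, B j * (b m (j+q) - b m (j+q+1))| ≤ M * K m := by
  set D : ℕ → ℝ := fun j => b m (j+q) - b m (j+q+1) with hD
  set h : ℕ := (m - 2*q + 1) / 2 with hh
  set h' : ℕ := min h L with hh'
  -- sign facts
  have hneg : ∀ j, j < h → D j ≤ 0 := by
    intro j hj
    have : 2*(j+q)+1 ≤ m := by omega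
    simp only [hD]
    have := b_le_succ (m := m) (k := j+q) this
    linarith
  have hpos : ∀ j, h ≤ j → 0 ≤ D j := by
    intro j hj
    have : m ≤ 2*(j+q)+1 := by omega
    simp only [hD]
    have := b_succ_le (m := m) (k := j+q) this
    linarith
  have hsplit : ∑ j ∈ range L, B j * D j
      = (∑ j ∈ Ico 0 h', B j * D j) + ∑ j ∈ Ico h' L, B j * D j := by
    rw [Finset.sum_Ico_consecutive _ (Nat.zero_le h') (min_le_right h L), ← Finset.range_eq_Ico]
  -- telescoping sums
  have t1 : ∑ j ∈ Ico 0 h', D j = b m q - b m (h' + q) := by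
    have := tele (fun j => b m (j + q)) 0 h' (Nat.zero_le _)
    simpa [hD, Nat.add_right_comm] using this
  have t2 : ∑ j ∈ Ico h' L, D j = b m (h' + q) - b m (L + q) := by
    rcases le_or_gt h' L with hle | hlt
    · have := tele (fun j => b m (j + q)) h' L hle
      simpa [hD, Nat.add_right_comm] using this
    · omega
  have hmem1 : ∀ j ∈ Ico 0 h', M * D j ≤ B j * D j ∧ B j * D j ≤ 0 := by
    intro j hj
    simp only [Finset.mem_Ico] at hj
    have hjh : j < h := lt_of_lt_of_le hj.2 (min_le_left _ _)
    have hd := hneg j hjh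
    constructor
    · exact mul_le_mul_of_nonpos_right (h1 j) hd
    · exact mul_nonpos_of_nonneg_of_nonpos (h0 j) hd
  have hmem2 : ∀ j ∈ Ico h' L, 0 ≤ B j * D j ∧ B j * D j ≤ M * D j := by
    intro j hj
    simp only [Finset.mem_Ico] at hj
    have hjh : h ≤ j := by
      rcases le_or_gt h L with hc | hc
      · have : h' = h := min_eq_left hc; omega
      · omega
    have hd := hpos j hjh
    exact ⟨mul_nonneg (h0 j) hd, mul_le_mul_of_nonneg_right (h1 j) hd⟩
  have s1lb : M * (b m q - b m (h'+q)) ≤ ∑ j ∈ Ico 0 h', B j * D j := by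
    calc M * (b m q - b m (h'+q)) = ∑ j ∈ Ico 0 h', M * D j := by rw [← Finset.mul_sum, t1]
    _ ≤ _ := Finset.sum_le_sum (fun j hj => (hmem1 j hj).1)
  have s1ub : ∑ j ∈ Ico 0 h', B j * D j ≤ 0 :=
    Finset.sum_nonpos (fun j hj => (hmem1 j hj).2)
  have s2lb : 0 ≤ ∑ j ∈ Ico h' L, B j * D j :=
    Finset.sum_nonneg (fun j hj => (hmem2 j hj).1)
  have s2ub : ∑ j ∈ Ico h' L, B j * D j ≤ M * (b m (h'+q) - b m (L+q)) := by
    calc ∑ j ∈ Ico h' L, B j * D j ≤ ∑ j ∈ Ico h' L, M * D j :=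
      Finset.sum_le_sum (fun j hj => (hmem2 j hj).2)
    _ = _ := by rw [← Finset.mul_sum, t2]
  rw [hsplit, abs_le]
  have hb1 : 0 ≤ b m q := b_nonneg m q
  have hb2 : b m (h'+q) ≤ K m := b_le_K m _
  have hb3 : 0 ≤ b m (L+q) := b_nonneg m _
  have hb4 : b m q ≤ K m := b_le_K m _
  have hb5 : 0 ≤ b m (h'+q) := b_nonneg m _
  constructor
  · nlinarith
  · nlinarith

noncomputable def T (m u v w : ℕ) : ℝ := ∑ j ∈ range (m+1), b m (j+u) * b m (j+v) * b m (j+w)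

noncomputable def S (m : ℕ) : ℝ := T m 0 1 2

lemma T_perm1 (m u v w : ℕ) : T m u v w = T m v w u :=
  Finset.sum_congr rfl (fun j _ => by ring)

lemma T_perm2 (m u v w : ℕ) : T m u v w = T m u w v :=
  Finset.sum_congr rfl (fun j _ => by ring)

lemma Tdiff (m u v q : ℕ) : |T m u v q - T m u v (q+1)| ≤ K m ^ 3 := by
  have h : T m u v q - T m u v (q+1)
      = ∑ j ∈ range (m+1), (b m (j+u) * b m (j+v)) * (b m (j+q) - b m (j+q+1)) := by
    rw [T, T, ← Finset.sum_sub_distrib]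
    exact Finset.sum_congr rfl (fun j _ => by ring)
  rw [h]
  have hK := K_pos m
  have := key m q (m+1) (fun j => b m (j+u) * b m (j+v)) (K m * K m)
    (by nlinarith)
    (fun j => mul_nonneg (b_nonneg _ _) (b_nonneg _ _))
    (fun j => mul_le_mul (b_le_K m (j+u)) (b_le_K m (j+v)) (b_nonneg _ _) (le_of_lt hK))
  calc _ ≤ (K m * K m) * K m := this
  _ = K m ^ 3 := by ring

-- Pascal
lemma b_pascal (m i : ℕ) : b (m+1) (i+1) = b m i + b m (i+1) := by
  unfold b; rw [Nat.choose_succ_succ]; push_cast; ring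

lemma choose2_cast (n : ℕ) : (Nat.choose n 2 : ℝ) = (n:ℝ)*((n:ℝ)-1)/2 := by
  rw [Nat.choose_two_right]
  rcases n with _ | k
  · norm_num
  · have hd : 2 ∣ (k+1) * k := by
      rcases Nat.even_or_odd k with h | h
      · exact Dvd.dvd.mul_left h.two_dvd _
      · exact Dvd.dvd.mul_right (Even.two_dvd (Odd.add_one h)) _
    rw [show (k+1) - 1 = k from rfl, Nat.cast_div hd (by norm_num)]
    push_cast; ring

-- the edge term bounds, for m ≥ 4
lemma edge1 (m : ℕ) (hm : 4 ≤ m) : 0 ≤ b m 0 * b m 1 * b m 2 ∧ b m 0 * b m 1 * b m 2 ≤ K m ^ 3 := by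
  constructor
  · exact mul_nonneg (mul_nonneg (b_nonneg _ _) (b_nonneg _ _)) (b_nonneg _ _)
  · have h0 : b m 0 ≤ K m := b_le_K m 0
    have h1 : b m 1 ≤ K m := b_le_K m 1
    have h2 : b m 2 ≤ K m := b_le_K m 2
    have n0 := b_nonneg m 0; have n1 := b_nonneg m 1; have n2 := b_nonneg m 2
    have hK := K_pos m
    calc b m 0 * b m 1 * b m 2 ≤ K m * K m * K m :=
      mul_le_mul (mul_le_mul h0 h1 n1 (le_of_lt hK)) h2 n2 (by nlinarith)
    _ = K m ^3 := by ring

lemma edge2 (m : ℕ) (hm : 4 ≤ m) :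
    0 ≤ b (m+1) 0 * b (m+1) 1 * b (m+1) 2 ∧ b (m+1) 0 * b (m+1) 1 * b (m+1) 2 ≤ K m ^ 3 := by
  have e0 : b (m+1) 0 = 1 := by unfold b; simp
  have e1 : b (m+1) 1 = (m:ℝ) + 1 := by
    unfold b; rw [Nat.choose_one_right]; push_cast; ring
  have e2 : b (m+1) 2 = ((m:ℝ)+1)*((m:ℝ)+1-1)/2 := by
    unfold b; rw [choose2_cast]; push_cast; ring
  have hK2 : ((m:ℝ)*((m:ℝ)-1))/2 ≤ K m := by
    have h := b_le_K m 2
    unfold b at h; rw [choose2_cast] at h; linarith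
  have hm' : (4:ℝ) ≤ m := by exact_mod_cast hm
  have hK := K_pos m
  have hA : ((m:ℝ)+1) ≤ K m := by nlinarith
  have hB : ((m:ℝ)+1)*((m:ℝ)+1-1)/2 ≤ K m * K m := by nlinarith
  constructor
  · rw [e0, e1, e2]; nlinarith [hm', sq_nonneg ((m:ℝ)+1)]
  · rw [e0, e1, e2]
    calc 1 * ((m:ℝ)+1) * (((m:ℝ)+1)*((m:ℝ)+1-1)/2) ≤ K m * (K m * K m) := by
          rw [one_mul]
          exact mul_le_mul hA hB (by nlinarith) (le_of_lt hK)
    _ = K m ^ 3 := by ring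

lemma b_top (m j : ℕ) (h : m < j) : b m j = 0 := by
  unfold b; rw [Nat.choose_eq_zero_of_lt h]; norm_num

lemma S_eq_shift (m : ℕ) : T m 1 2 3 = S m - b m 0 * b m 1 * b m 2 := by
  have h1 : S m = (∑ j ∈ range m, b m (j+1) * b m (j+2) * b m (j+3)) + b m 0 * b m 1 * b m 2 := by
    unfold S T
    rw [Finset.sum_range_succ']
  have h2 : T m 1 2 3 = (∑ j ∈ range m, b m (j+1) * b m (j+2) * b m (j+3)) := by
    unfold T
    rw [Finset.sum_range_succ]
    rw [b_top m (m+1) (by omega), zero_mul, zero_mul, add_zero]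
  rw [h2, h1]; ring

lemma expand (m : ℕ) : S (m+1) =
    T m 0 1 2 + T m 0 1 3 + T m 0 2 2 + T m 0 2 3 + T m 1 1 2 + T m 1 1 3 + T m 1 2 2 + T m 1 2 3
      + b (m+1) 0 * b (m+1) 1 * b (m+1) 2 := by
  have h1 : S (m+1) = (∑ j ∈ range (m+1),
      b (m+1) (j+1) * b (m+1) (j+2) * b (m+1) (j+3)) + b (m+1) 0 * b (m+1) 1 * b (m+1) 2 := by
    unfold S T
    rw [Finset.sum_range_succ']
  have h2 : ∀ j : ℕ, b (m+1) (j+1) * b (m+1) (j+2) * b (m+1) (j+3)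
      = b m (j+0) * b m (j+1) * b m (j+2) + b m (j+0) * b m (j+1) * b m (j+3)
      + b m (j+0) * b m (j+2) * b m (j+2) + b m (j+0) * b m (j+2) * b m (j+3)
      + b m (j+1) * b m (j+1) * b m (j+2) + b m (j+1) * b m (j+1) * b m (j+3)
      + b m (j+1) * b m (j+2) * b m (j+2) + b m (j+1) * b m (j+2) * b m (j+3) := by
    intro j
    rw [b_pascal m j, show j+2 = (j+1)+1 from rfl, b_pascal m (j+1),
      show (j+1)+1+1 = (j+2)+1 from rfl, b_pascal m (j+2)]
    ring_nf
  rw [h1, Finset.sum_congr rfl (fun j _ => h2 j)]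
  simp only [Finset.sum_add_distrib]
  unfold T
  ring

lemma main_ineq (m : ℕ) (hm : 4 ≤ m) : |S (m+1) - 8 * S m| ≤ 12 * K m ^ 3 := by
  have e := expand m
  have sh := S_eq_shift m
  have pe1 : T m 0 2 1 = S m := T_perm2 m 0 2 1
  have pe2 : T m 1 2 0 = S m := (T_perm1 m 1 2 0).trans (T_perm1 m 2 0 1)
  have pe3 : T m 1 2 1 = T m 1 1 2 := T_perm2 m 1 2 1
  have pe4 : T m 1 3 0 = T m 0 1 3 := (T_perm1 m 1 3 0).trans (T_perm1 m 3 0 1)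
  have pe5 : T m 1 3 1 = T m 1 1 3 := T_perm2 m 1 3 1
  have pe6 : T m 2 2 0 = T m 0 2 2 := (T_perm1 m 2 2 0).trans (T_perm1 m 2 0 2)
  have pe7 : T m 2 2 1 = T m 1 2 2 := (T_perm1 m 2 2 1).trans (T_perm1 m 2 1 2)
  have g1 := abs_le.mp (Tdiff m 0 1 2)
  have g2 := abs_le.mp (Tdiff m 0 2 1)
  have g3 := abs_le.mp (Tdiff m 0 2 2)
  have g4 := abs_le.mp (Tdiff m 1 2 0)
  have g5 := abs_le.mp (Tdiff m 1 3 0)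
  have g6 := abs_le.mp (Tdiff m 2 2 0)
  have he1 := edge1 m hm
  have he2 := edge2 m hm
  have hS : T m 0 1 2 = S m := rfl
  rw [abs_le]
  constructor
  · linarith [g1.1, g1.2, g2.1, g2.2, g3.1, g3.2, g4.1, g4.2, g5.1, g5.2, g6.1, g6.2,
      he1.1, he1.2, he2.1, he2.2]
  · linarith [g1.1, g1.2, g2.1, g2.2, g3.1, g3.2, g4.1, g4.2, g5.1, g5.2, g6.1, g6.2,
      he1.1, he1.2, he2.1, he2.2]

def r (m : ℕ) : ℕ := Nat.sqrt m / 4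

lemma r_facts (m : ℕ) (hm : 100 ≤ m) :
    1 ≤ r m ∧ 2 * (r m * (2 * r m + 2)) ≤ m / 2 ∧ m / 2 + r m ≤ m := by
  set s := Nat.sqrt m with hs
  set R := r m with hR
  have hs2 : s * s ≤ m := by
    have := Nat.sqrt_le' m; simpa [pow_two] using this
  have hs10 : 10 ≤ s := Nat.le_sqrt'.mpr (by omega)
  have hRs : R = s / 4 := rfl
  have h4r : 4 * R ≤ s := by omega
  have h16' : 16 * (R * R) ≤ m := by
    have t := Nat.mul_le_mul h4r h4r
    have e1 : 4 * R * (4 * R) = 16 * (R * R) := by ring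
    rw [e1] at t
    exact le_trans t hs2
  have h10s : 10 * s ≤ s * s := Nat.mul_le_mul_right s hs10
  have h2 : 40 * R ≤ m := by omega
  have hexp : R * (2 * R + 2) = 2 * (R * R) + 2 * R := by ring
  refine ⟨by omega, ?_, by omega⟩
  rw [hexp]; omega

lemma b_step (m k : ℕ) (hk : k ≤ m) :
    ((k:ℝ) + 1) * b m (k+1) = ((m:ℝ) - (k:ℝ)) * b m k := by
  unfold b
  rw [← Nat.cast_sub hk, mul_comm ((k:ℝ)+1) _, mul_comm _ ((Nat.choose m k : ℕ):ℝ)]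
  exact_mod_cast Nat.choose_succ_right_eq m k

lemma central (m : ℕ) (hm : 100 ≤ m) :
    ∀ j, m/2 - r m ≤ j → j ≤ m/2 + r m → K m / 2 ≤ b m j := by
  obtain ⟨hr1, hrc, hcm⟩ := r_facts m hm
  set c := m / 2 with hc
  set R := r m with hR
  have hcN : 50 ≤ c := by omega
  have hmul1 : R * 4 ≤ R * (2 * R + 2) := Nat.mul_le_mul_left R (by omega)
  have hRc : R ≤ c := by omega
  have hc0 : (0:ℝ) < (c:ℝ) := by exact_mod_cast (by omega : 0 < c)
  set ρ : ℝ := 1 - (2*(R:ℝ)+2)/(c:ℝ) with hρ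
  have hmul2 : 1 * (2 * R + 2) ≤ R * (2 * R + 2) := Nat.mul_le_mul_right _ hr1
  have hnumN : 2 * R + 2 ≤ c := by omega
  have hnum : (2*(R:ℝ)+2) ≤ (c:ℝ) := by exact_mod_cast hnumN
  have hρ0 : 0 ≤ ρ := by
    have := (div_le_one hc0).mpr hnum; rw [hρ]; linarith
  have hρ1 : ρ ≤ 1 := by
    rw [hρ]
    have : 0 ≤ (2*(R:ℝ)+2)/(c:ℝ) := by positivity
    linarith
  have hrcR : (R:ℝ) * (2*(R:ℝ)+2) ≤ (c:ℝ)/2 := by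
    have : (2 * (R * (2*R+2)) : ℕ) ≤ c := hrc
    have h' : (2:ℝ) * ((R:ℝ) * (2*(R:ℝ)+2)) ≤ (c:ℝ) := by exact_mod_cast this
    linarith
  have hhalf : (1:ℝ)/2 ≤ ρ^R := by
    have hx : (-2:ℝ) ≤ -((2*(R:ℝ)+2)/(c:ℝ)) := by
      have := (div_le_one hc0).mpr hnum; linarith
    have hber := one_add_mul_le_pow hx R
    have heq : (1 + -((2*(R:ℝ)+2)/(c:ℝ))) = ρ := by rw [hρ]; ring
    rw [heq] at hber
    have hfrac : (R:ℝ) * ((2*(R:ℝ)+2)/(c:ℝ)) ≤ 1/2 := by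
      rw [mul_div_assoc']
      rw [div_le_iff₀ hc0]
      linarith
    calc (1:ℝ)/2 = 1 + (-(1/2)) := by ring
    _ ≤ 1 + (R:ℝ) * -((2*(R:ℝ)+2)/(c:ℝ)) := by
        have : (R:ℝ) * -((2*(R:ℝ)+2)/(c:ℝ)) = -((R:ℝ) * ((2*(R:ℝ)+2)/(c:ℝ))) := by ring
        rw [this]; linarith
    _ ≤ ρ^R := hber
  have hcmR : 2 * c ≤ m := by omega
  have hcm2 : (2:ℝ) * (c:ℝ) ≤ (m:ℝ) := by exact_mod_cast hcmR
  have hmc : (m:ℝ) - (c:ℝ) ≤ (c:ℝ) + 1 := by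
    have : m ≤ 2 * c + 1 := by omega
    have := (Nat.cast_le (α := ℝ)).mpr this
    push_cast at this; linarith
  -- upward induction
  have key_up : ∀ i, i ≤ R → K m * ρ^i ≤ b m (c + i) := by
    intro i
    induction i with
    | zero => intro _; simp only [pow_zero, mul_one, Nat.add_zero]; exact le_of_eq rfl
    | succ i ih =>
      intro hiR
      have hi := ih (by omega)
      have hkm : c + i ≤ m := by omega
      have hstep := b_step m (c+i) hkm
      have hiR' : (i:ℝ) ≤ (R:ℝ) := by exact_mod_cast (by omega : i ≤ R)
      have hbpos : 0 ≤ b m (c+i) := b_nonneg m _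
      -- ρ * (c+i+1) ≤ m - c - i
      have hρle : ρ * ((c:ℝ)+(i:ℝ)+1) ≤ (m:ℝ) - ((c:ℝ)+(i:ℝ)) := by
        have hρeq : ρ = ((c:ℝ) - (2*(R:ℝ)+2))/(c:ℝ) := by
          rw [hρ]; field_simp
        rw [hρeq, div_mul_eq_mul_div, div_le_iff₀ hc0]
        nlinarith [mul_nonneg (sub_nonneg.mpr hcm2) hc0.le,
          mul_nonneg (by linarith : (0:ℝ) ≤ 2*(R:ℝ)+2-(2*(i:ℝ)+1)) hc0.le,
          mul_nonneg (by linarith : (0:ℝ) ≤ 2*(R:ℝ)+2) (by linarith : (0:ℝ) ≤ (i:ℝ)+1)]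
      have hcast : ((c+i : ℕ):ℝ) = (c:ℝ)+(i:ℝ) := by push_cast; ring
      rw [hcast] at hstep
      have hpos1 : (0:ℝ) < (c:ℝ)+(i:ℝ)+1 := by positivity
      have hge : ρ * b m (c+i) ≤ b m (c+i+1) := by
        rw [show b m (c+i+1) = (((m:ℝ) - ((c:ℝ)+(i:ℝ))) * b m (c+i))/((c:ℝ)+(i:ℝ)+1) from by
          rw [← hstep]; field_simp]
        rw [le_div_iff₀ hpos1]
        calc ρ * b m (c+i) * ((c:ℝ)+(i:ℝ)+1) = (ρ * ((c:ℝ)+(i:ℝ)+1)) * b m (c+i) := by ring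
        _ ≤ ((m:ℝ) - ((c:ℝ)+(i:ℝ))) * b m (c+i) := mul_le_mul_of_nonneg_right hρle hbpos
      calc K m * ρ^(i+1) = ρ * (K m * ρ^i) := by ring
      _ ≤ ρ * b m (c+i) := mul_le_mul_of_nonneg_left hi hρ0
      _ ≤ b m (c+i+1) := hge
  -- downward induction
  have key_down : ∀ i, i ≤ R → K m * ρ^i ≤ b m (c - i) := by
    intro i
    induction i with
    | zero => intro _; simp only [pow_zero, mul_one, Nat.sub_zero]; exact le_of_eq rfl
    | succ i ih =>
      intro hiR
      have hi := ih (by omega)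
      have hic : i + 1 ≤ c := by omega
      have hstep := b_step m (c-i-1) (by omega)
      have hidx : c - i - 1 + 1 = c - i := by omega
      rw [hidx] at hstep
      have hiR' : (i:ℝ) ≤ (R:ℝ) := by exact_mod_cast (by omega : i ≤ R)
      have hbpos : 0 ≤ b m (c-i) := b_nonneg m _
      have hcast1 : ((c-i-1:ℕ):ℝ) = (c:ℝ)-(i:ℝ)-1 := by
        rw [show c-i-1 = c-(i+1) by omega, Nat.cast_sub (by omega : i+1 ≤ c)]
        push_cast; ring
      rw [hcast1] at hstep
      -- hstep : ((c:ℝ)-(i:ℝ)-1+1) * b m (c-i) = ((m:ℝ) - ((c:ℝ)-(i:ℝ)-1)) * b m (c-i-1)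
      have hdenpos : (0:ℝ) < (m:ℝ) - ((c:ℝ)-(i:ℝ)-1) := by
        have : (c:ℝ) ≤ (m:ℝ) := by exact_mod_cast (by omega : c ≤ m)
        linarith [Nat.cast_nonneg (α := ℝ) i]
      have hρle : ρ * ((m:ℝ) - ((c:ℝ)-(i:ℝ)-1)) ≤ (c:ℝ) - (i:ℝ) := by
        have hρeq : ρ = ((c:ℝ) - (2*(R:ℝ)+2))/(c:ℝ) := by
          rw [hρ]; field_simp
        have hb1 : (m:ℝ) - ((c:ℝ)-(i:ℝ)-1) ≤ (c:ℝ)+(i:ℝ)+2 := by linarith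
        have h1 : ρ * ((m:ℝ) - ((c:ℝ)-(i:ℝ)-1)) ≤ ρ * ((c:ℝ)+(i:ℝ)+2) :=
          mul_le_mul_of_nonneg_left hb1 hρ0
        have h2 : ρ * ((c:ℝ)+(i:ℝ)+2) ≤ (c:ℝ) - (i:ℝ) := by
          rw [hρeq, div_mul_eq_mul_div, div_le_iff₀ hc0]
          have hiR2 : (i:ℝ) + 1 ≤ (R:ℝ) := by exact_mod_cast hiR
          nlinarith [mul_nonneg (by linarith : (0:ℝ) ≤ 2*(R:ℝ)+2-(2*(i:ℝ)+2)) hc0.le,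
            mul_nonneg (by linarith : (0:ℝ) ≤ 2*(R:ℝ)+2) (by linarith : (0:ℝ) ≤ (i:ℝ)+2)]
        linarith
      have hge : ρ * b m (c-i) ≤ b m (c-i-1) := by
        rw [show b m (c-i-1) = (((c:ℝ)-(i:ℝ)-1+1) * b m (c-i))/((m:ℝ) - ((c:ℝ)-(i:ℝ)-1)) from by
          rw [hstep]; field_simp [ne_of_gt hdenpos]]
        rw [le_div_iff₀ hdenpos]
        calc ρ * b m (c-i) * ((m:ℝ) - ((c:ℝ)-(i:ℝ)-1))
            = (ρ * ((m:ℝ) - ((c:ℝ)-(i:ℝ)-1))) * b m (c-i) := by ring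
        _ ≤ ((c:ℝ)-(i:ℝ)) * b m (c-i) := mul_le_mul_of_nonneg_right hρle hbpos
        _ = ((c:ℝ)-(i:ℝ)-1+1) * b m (c-i) := by ring
      have hidx2 : c - (i+1) = c - i - 1 := by omega
      rw [hidx2]
      calc K m * ρ^(i+1) = ρ * (K m * ρ^i) := by ring
      _ ≤ ρ * b m (c-i) := mul_le_mul_of_nonneg_left hi hρ0
      _ ≤ b m (c-i-1) := hge
  -- conclude
  intro j hj1 hj2
  have hKpos := K_pos m
  rcases le_or_gt c j with hcj | hjc
  · have hiR : j - c ≤ R := by omega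
    have := key_up (j - c) hiR
    rw [show c + (j - c) = j by omega] at this
    have hp : ρ^R ≤ ρ^(j-c) := pow_le_pow_of_le_one hρ0 hρ1 hiR
    calc K m / 2 = K m * (1/2) := by ring
    _ ≤ K m * ρ^(j-c) := by
        apply mul_le_mul_of_nonneg_left _ hKpos.le
        exact le_trans hhalf hp
    _ ≤ b m j := this
  · have hiR : c - j ≤ R := by omega
    have := key_down (c - j) hiR
    rw [show c - (c - j) = j by omega] at this
    have hp : ρ^R ≤ ρ^(c-j) := pow_le_pow_of_le_one hρ0 hρ1 hiR
    calc K m / 2 = K m * (1/2) := by ring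
    _ ≤ K m * ρ^(c-j) := by
        apply mul_le_mul_of_nonneg_left _ hKpos.le
        exact le_trans hhalf hp
    _ ≤ b m j := this

lemma S_lower (m : ℕ) (hm : 100 ≤ m) : (r m : ℝ) * (K m / 2)^3 ≤ S m := by
  obtain ⟨hr1, hrc, hcm⟩ := r_facts m hm
  set c := m / 2 with hc
  set R := r m with hR
  have hmul1 : R * 4 ≤ R * (2 * R + 2) := Nat.mul_le_mul_left R (by omega)
  have hRc2 : 4 * R ≤ c := by omega
  have hsub : Icc (c - R) (c + R - 2) ⊆ range (m+1) := by
    intro x hx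
    simp only [Finset.mem_Icc] at hx
    simp only [Finset.mem_range]
    omega
  have hterm : ∀ j ∈ Icc (c - R) (c + R - 2), (K m / 2)^3 ≤ b m (j+0) * b m (j+1) * b m (j+2) := by
    intro j hj
    simp only [Finset.mem_Icc] at hj
    have h1 := central m hm (j+0) (by omega) (by omega)
    have h2 := central m hm (j+1) (by omega) (by omega)
    have h3 := central m hm (j+2) (by omega) (by omega)
    have hK2 : (0:ℝ) ≤ K m / 2 := by linarith [K_pos m]
    calc (K m / 2)^3 = (K m/2) * (K m/2) * (K m/2) := by ring
    _ ≤ b m (j+0) * b m (j+1) * b m (j+2) := by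
        apply mul_le_mul (mul_le_mul h1 h2 hK2 (le_trans hK2 h1)) h3 hK2
        exact mul_nonneg (le_trans hK2 h1) (le_trans hK2 h2)
  have hcard : (2 * R - 1) = (Icc (c - R) (c + R - 2)).card := by
    rw [Nat.card_Icc]; omega
  have hsum1 : ∑ j ∈ Icc (c - R) (c + R - 2), b m (j+0) * b m (j+1) * b m (j+2) ≤ S m := by
    apply Finset.sum_le_sum_of_subset_of_nonneg hsub
    intro j _ _
    exact mul_nonneg (mul_nonneg (b_nonneg _ _) (b_nonneg _ _)) (b_nonneg _ _)
  have hsum2 : ((2*R-1 : ℕ):ℝ) * (K m / 2)^3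
      ≤ ∑ j ∈ Icc (c - R) (c + R - 2), b m (j+0) * b m (j+1) * b m (j+2) := by
    rw [hcard]
    have := Finset.card_nsmul_le_sum (Icc (c - R) (c + R - 2))
      (fun j => b m (j+0) * b m (j+1) * b m (j+2)) ((K m / 2)^3) hterm
    rwa [nsmul_eq_mul] at this
  have hRle : (R:ℝ) ≤ ((2*R-1:ℕ):ℝ) := by exact_mod_cast (by omega : R ≤ 2*R-1)
  have hK2 : (0:ℝ) ≤ (K m / 2)^3 := pow_nonneg (by linarith [K_pos m]) 3
  calc (R:ℝ) * (K m / 2)^3 ≤ ((2*R-1:ℕ):ℝ) * (K m/2)^3 := mul_le_mul_of_nonneg_right hRle hK2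
  _ ≤ _ := le_trans hsum2 hsum1

lemma S_pos (m : ℕ) (hm : 100 ≤ m) : 0 < S m := by
  obtain ⟨hr1, _, _⟩ := r_facts m hm
  have h := S_lower m hm
  have hK := K_pos m
  have : (0:ℝ) < (r m : ℝ) * (K m / 2)^3 := by
    apply mul_pos (by exact_mod_cast hr1)
    exact pow_pos (by linarith) 3
  linarith


lemma ratio_bound (m : ℕ) (hm : 100 ≤ m) :
    |S (m+1) / S m - 8| ≤ 96 / (r m : ℝ) := by
  have hS := S_pos m hm
  have hK := K_pos m
  obtain ⟨hr1, _, _⟩ := r_facts m hm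
  have hr0 : (0:ℝ) < (r m : ℝ) := by exact_mod_cast hr1
  have hlow := S_lower m hm
  have hK3 : (r m : ℝ) * K m ^ 3 ≤ 8 * S m := by
    have h8 : (r m : ℝ) * (K m/2)^3 = (r m : ℝ) * K m ^3 / 8 := by ring
    rw [h8] at hlow
    linarith
  have h1 : |S (m+1) / S m - 8| = |S (m+1) - 8 * S m| / S m := by
    rw [show S (m+1) / S m - 8 = (S (m+1) - 8 * S m)/ S m from by field_simp]
    rw [abs_div, abs_of_pos hS]
  rw [h1, div_le_div_iff₀ hS hr0]
  calc |S (m+1) - 8 * S m| * (r m : ℝ) ≤ (12 * K m ^3) * (r m : ℝ) :=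
        mul_le_mul_of_nonneg_right (main_ineq m (by omega)) hr0.le
  _ = 12 * ((r m : ℝ) * K m ^3) := by ring
  _ ≤ 12 * (8 * S m) := mul_le_mul_of_nonneg_left hK3 (by norm_num)
  _ = 96 * S m := by ring

-- the g formula
lemma g_eq (n : ℕ) (hn : 1 ≤ n) : g n = S (n+1) / ((n:ℝ) * ((n:ℝ)+1)) := by
  set m := n + 1 with hm
  set C : ℝ := 2/((n:ℝ) * ((m:ℕ):ℝ)^2) with hC
  set W : ℝ := ∑ k ∈ range (n+2), (k:ℝ) * (b m (k-1) * b m k * b m (k+1)) with hW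
  have hterm : ∀ k : ℕ, (k:ℝ) * D n k = C * ((k:ℝ) * (b m (k-1) * b m k * b m (k+1))) := by
    intro k
    by_cases hk : k = 0
    · subst hk; simp [D]
    · rw [D, if_neg hk]; unfold b; rw [hC, hm]; push_cast; ring
  have step1 : g n = C * W := by
    rw [g, hW, Finset.sum_congr rfl (fun k _ => hterm k), ← Finset.mul_sum]
    congr 1
    rw [Finset.sum_range_succ (fun k => (k:ℝ) * (b m (k-1) * b m k * b m (k+1))) (n+1)]
    rw [b_top m ((n+1)+1) (by omega)]
    simp
  have step2 : W = ∑ j ∈ range (n+1), ((j+1:ℕ):ℝ) * (b m j * b m (j+1) * b m (j+2)) := by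
    rw [hW, Finset.sum_range_succ']
    norm_num
  have step3 : W = ∑ j ∈ range (n+1), ((n-j:ℕ):ℝ) * (b m j * b m (j+1) * b m (j+2)) := by
    have hrefl := Finset.sum_range_reflect
      (fun k => (k:ℝ) * (b m (k-1) * b m k * b m (k+1))) (n+2)
    rw [hW, ← hrefl, Finset.sum_range_succ']
    have h0 : (((n+2-1-0:ℕ)):ℝ) * (b m ((n+2-1-0)-1) * b m (n+2-1-0) * b m ((n+2-1-0)+1)) = 0 := by
      rw [show n+2-1-0 = n+1 by omega, show (n+1)+1 = n+2 from rfl, b_top m (n+2) (by omega)]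
      ring
    rw [h0, add_zero]
    apply Finset.sum_congr rfl
    intro j hj
    simp only [Finset.mem_range] at hj
    have hjn : j ≤ n := by omega
    rcases Nat.eq_or_lt_of_le hjn with he | hlt
    · rw [show n+2-1-(j+1) = 0 by omega, show n-j = 0 by omega]
      norm_num
    · rw [show n+2-1-(j+1) = n-j by omega]
      congr 1
      rw [show n-j-1 = m-(j+2) by omega, show n-j+1 = m-j by omega,
        show n-j = m-(j+1) by omega]
      unfold b
      rw [Nat.choose_symm (by omega : j+2 ≤ m), show m-(j+1) = m - (j+1) from rfl,
        Nat.choose_symm (by omega : j+1 ≤ m), Nat.choose_symm (by omega : j ≤ m)]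
      ring
  have step5 : S m = ∑ j ∈ range (n+1), b m j * b m (j+1) * b m (j+2) := by
    rw [S, T, show m + 1 = (n+1)+1 from by omega]
    rw [Finset.sum_range_succ]
    rw [show (n+1)+1 = n+2 from rfl, b_top m (n+2) (by omega)]
    simp only [Nat.add_zero, zero_mul, mul_zero, add_zero]
  have step4 : 2 * W = ((m:ℕ):ℝ) * S m := by
    calc 2 * W = W + W := by ring
    _ = ∑ j ∈ range (n+1), (((j+1:ℕ):ℝ) + ((n-j:ℕ):ℝ)) * (b m j * b m (j+1) * b m (j+2)) := by
        nth_rewrite 2 [step3]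
        rw [step2, ← Finset.sum_add_distrib]
        exact Finset.sum_congr rfl (fun j _ => by ring)
    _ = ∑ j ∈ range (n+1), ((m:ℕ):ℝ) * (b m j * b m (j+1) * b m (j+2)) := by
        apply Finset.sum_congr rfl
        intro j hj
        simp only [Finset.mem_range] at hj
        congr 1
        push_cast [hm, Nat.cast_sub (by omega : j ≤ n)]
        ring
    _ = ((m:ℕ):ℝ) * S m := by rw [← Finset.mul_sum, step5]
  have hn0 : ((n:ℕ):ℝ) ≠ 0 := by
    have : (0:ℝ) < (n:ℝ) := by exact_mod_cast hn
    linarith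
  have hm0 : (((m:ℕ)):ℝ) ≠ 0 := by
    have : (0:ℝ) < ((m:ℕ):ℝ) := by exact_mod_cast (by omega : 0 < m)
    linarith
  rw [step1, show W = ((m:ℕ):ℝ) * S m / 2 from by linarith [step4], hC]
  rw [show (((m:ℕ)):ℝ) = (n:ℝ)+1 from by push_cast [hm]; ring]
  field_simp

theorem final : Filter.Tendsto (fun n : ℕ => g (n + 1) / g n) Filter.atTop (nhds 8) := by
  have hr : Filter.Tendsto (fun n : ℕ => r (n+1)) Filter.atTop Filter.atTop := by
    apply Filter.tendsto_atTop_atTop.mpr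
    intro bb
    refine ⟨16*(bb+1)*(bb+1), fun n hn => ?_⟩
    have e : 16*(bb+1)*(bb+1) = (4*(bb+1))*(4*(bb+1)) := by ring
    have h1 : (4*(bb+1))^2 ≤ n+1 := by rw [pow_two]; omega
    have h2 : 4*(bb+1) ≤ Nat.sqrt (n+1) := Nat.le_sqrt'.mpr h1
    have h3 : r (n+1) = Nat.sqrt (n+1) / 4 := rfl
    omega
  have hrR : Filter.Tendsto (fun n : ℕ => ((r (n+1) : ℕ):ℝ)) Filter.atTop Filter.atTop :=
    tendsto_natCast_atTop_atTop.comp hr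
  have hu : Filter.Tendsto (fun n : ℕ => (96:ℝ) / ((r (n+1) : ℕ):ℝ)) Filter.atTop (nhds 0) :=
    Filter.Tendsto.div_atTop tendsto_const_nhds hrR
  have hbound : ∀ᶠ n in Filter.atTop, ‖S (n+2)/S (n+1) - 8‖ ≤ 96 / ((r (n+1):ℕ) : ℝ) := by
    rw [Filter.eventually_atTop]
    refine ⟨100, fun n hn => ?_⟩
    have := ratio_bound (n+1) (by omega)
    simpa [Real.norm_eq_abs, show n+1+1 = n+2 from rfl] using this
  have hsq := squeeze_zero_norm' hbound hu
  have h8 : Filter.Tendsto (fun n : ℕ => S (n+2) / S (n+1)) Filter.atTop (nhds 8) := by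
    have h := hsq.add_const 8
    norm_num at h
    exact h
  have hden : Filter.Tendsto (fun n : ℕ => (n:ℝ)+2) Filter.atTop Filter.atTop :=
    Filter.tendsto_atTop_add_const_right _ 2 tendsto_natCast_atTop_atTop
  have h2' : Filter.Tendsto (fun n : ℕ => (2:ℝ)/((n:ℝ)+2)) Filter.atTop (nhds 0) :=
    Filter.Tendsto.div_atTop tendsto_const_nhds hden
  have h1' : Filter.Tendsto (fun n : ℕ => (n:ℝ)/((n:ℝ)+2)) Filter.atTop (nhds 1) := by
    have h := (tendsto_const_nhds (x := (1:ℝ)) (f := Filter.atTop (α := ℕ))).sub h2'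
    norm_num at h
    apply h.congr
    intro n
    have hpos : ((n:ℝ)+2) ≠ 0 := by positivity
    field_simp
    ring
  have hprod := h8.mul h1'
  norm_num at hprod
  apply hprod.congr'
  rw [Filter.eventuallyEq_iff_exists_mem]
  refine ⟨Set.Ici 100, Filter.Ici_mem_atTop 100, fun n hn => ?_⟩
  have hn' : 100 ≤ n := hn
  have hg1 : g n = S (n+1) / ((n:ℝ) * ((n:ℝ)+1)) := g_eq n (by omega)
  have hg2 : g (n+1) = S (n+2) / (((n+1:ℕ):ℝ) * (((n+1:ℕ):ℝ)+1)) := g_eq (n+1) (by omega)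
  have hS1 : 0 < S (n+1) := S_pos (n+1) (by omega)
  have hn0 : (0:ℝ) < (n:ℝ) := by exact_mod_cast (by omega : 0 < n)
  show S (n+2)/S (n+1) * ((n:ℝ)/((n:ℝ)+2)) = g (n+1)/g n
  rw [hg1, hg2]
  have hS1' : S (n+1) ≠ 0 := ne_of_gt hS1
  have e1 : (n:ℝ) ≠ 0 := ne_of_gt hn0
  have e2 : ((n+1:ℕ):ℝ) = (n:ℝ)+1 := by push_cast; ring
  rw [e2]
  have e3 : (n:ℝ)+1 ≠ 0 := by positivity
  have e4 : (n:ℝ)+2 ≠ 0 := by positivity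
  field_simp
  ring

end BX

theorem baxter_deriv_ratio_limit :
    Filter.Tendsto (fun n : ℕ => g (n + 1) / g n) Filter.atTop (nhds 8) :=
  BX.final
end

section
/- The second factorial moment ratio ℬ_n''(1)/(n²·ℬ_n(1)) converges to 1/4 as n → ∞. -/
open Finset

noncomputable def h (n : ℕ) : ℝ := ∑ k ∈ range (n + 1), (k : ℝ) * ((k : ℝ) - 1) * D n k

noncomputable def uu (n k : ℕ) : ℝ :=
  ((Nat.choose (n+1) (k-1) * Nat.choose (n+1) k * Nat.choose (n+1) (k+1) : ℕ) : ℝ)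

noncomputable def T (n : ℕ) : ℝ := ∑ k ∈ Icc 1 n, uu n k

lemma uu_nonneg (n k : ℕ) : 0 ≤ uu n k := Nat.cast_nonneg _

lemma uu_one_pos (n : ℕ) (hn : 1 ≤ n) : 0 < uu n 1 := by
  unfold uu
  have h0 : 0 < Nat.choose (n+1) 0 := Nat.choose_pos (by omega)
  have h1 : 0 < Nat.choose (n+1) 1 := Nat.choose_pos (by omega)
  have h2 : 0 < Nat.choose (n+1) 2 := Nat.choose_pos (by omega)
  exact_mod_cast mul_pos (mul_pos h0 h1) h2

lemma T_pos (n : ℕ) (hn : 1 ≤ n) : 0 < T n := by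
  apply Finset.sum_pos' (fun k _ => uu_nonneg n k)
  exact ⟨1, mem_Icc.mpr ⟨le_refl 1, hn⟩, uu_one_pos n hn⟩

lemma D_eq (n k : ℕ) (hk : k ≠ 0) : D n k = 2/(n*(n+1)^2) * uu n k := by
  simp only [D, if_neg hk, uu]
  push_cast
  ring

lemma B_eq (n : ℕ) (hn : n ≠ 0) : B n = 2/(n*(n+1)^2) * T n := by
  rw [B, if_neg hn, T, mul_sum]
  exact sum_congr rfl fun k hk => D_eq n k (by have := (mem_Icc.mp hk).1; omega)

lemma h_eq (n : ℕ) (hn : n ≠ 0) :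
    h n = 2/(n*(n+1)^2) * ∑ k ∈ Icc 1 n, ((k:ℝ) * ((k:ℝ) - 1)) * uu n k := by
  rw [h, mul_sum]
  rw [show (range (n+1)) = Icc 0 n by rw [range_eq_Ico]; rfl]
  rw [show Icc 0 n = insert 0 (Icc 1 n) by
    ext x; simp [mem_Icc, mem_insert]; omega]
  rw [sum_insert (by simp)]
  simp only [Nat.cast_zero, zero_mul, zero_add]
  exact sum_congr rfl fun k hk => by
    rw [D_eq n k (by have := (mem_Icc.mp hk).1; omega)]; ring

lemma uu_symm (n k : ℕ) (h1 : 1 ≤ k) (h2 : k ≤ n) : uu n (n+1-k) = uu n k := by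
  unfold uu
  norm_cast
  have e1 : n+1-k-1 = (n+1) - (k+1) := by omega
  have e2 : n+1-k+1 = (n+1) - (k-1) := by omega
  have e3 : n+1-k = (n+1) - k := by omega
  rw [e1, e2, e3, Nat.choose_symm (by omega), Nat.choose_symm (by omega),
    Nat.choose_symm (by omega)]
  ring

lemma sum_symm (n : ℕ) (F : ℕ → ℝ) :
    ∑ k ∈ Icc 1 n, F k * uu n k = ∑ k ∈ Icc 1 n, F (n+1-k) * uu n k := by
  refine Finset.sum_nbij' (i := fun k => n+1-k) (j := fun k => n+1-k) ?_ ?_ ?_ ?_ ?_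
  · intro a ha; simp only [mem_Icc] at *; omega
  · intro a ha; simp only [mem_Icc] at *; omega
  · intro a ha; simp only [mem_Icc] at *; omega
  · intro a ha; simp only [mem_Icc] at *; omega
  · intro a ha
    simp only [mem_Icc] at ha
    rw [show n+1-(n+1-a) = a by omega, uu_symm n a ha.1 ha.2]

lemma key_s14 (m k : ℕ) (hk : 1 ≤ k) :
    ((m:ℝ)+2)^3 * uu m k = (k:ℝ)*((k:ℝ)+1)*((k:ℝ)+2) * uu (m+1) (k+1) := by
  have h1 : (m+2) * Nat.choose (m+1) (k-1) = Nat.choose (m+2) k * k := by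
    have := Nat.add_one_mul_choose_eq (m+1) (k-1)
    rw [show k-1+1 = k by omega] at this
    simpa [Nat.succ_eq_add_one] using this
  have h2 : (m+2) * Nat.choose (m+1) k = Nat.choose (m+2) (k+1) * (k+1) := by
    have := Nat.add_one_mul_choose_eq (m+1) k
    simpa [Nat.succ_eq_add_one] using this
  have h3 : (m+2) * Nat.choose (m+1) (k+1) = Nat.choose (m+2) (k+2) * (k+2) := by
    have := Nat.add_one_mul_choose_eq (m+1) (k+1)
    simpa [Nat.succ_eq_add_one] using this
  have H : (m+2)^3 * (Nat.choose (m+1) (k-1) * Nat.choose (m+1) k * Nat.choose (m+1) (k+1))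
      = (k*(k+1)*(k+2)) * (Nat.choose (m+2) k * Nat.choose (m+2) (k+1) * Nat.choose (m+2) (k+2)) := by
    calc (m+2)^3 * (Nat.choose (m+1) (k-1) * Nat.choose (m+1) k * Nat.choose (m+1) (k+1))
        = ((m+2) * Nat.choose (m+1) (k-1)) * ((m+2) * Nat.choose (m+1) k)
            * ((m+2) * Nat.choose (m+1) (k+1)) := by ring
      _ = (Nat.choose (m+2) k * k) * (Nat.choose (m+2) (k+1) * (k+1))
            * (Nat.choose (m+2) (k+2) * (k+2)) := by rw [h1, h2, h3]
      _ = _ := by ring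
  unfold uu
  rw [show (k+1)-1 = k from rfl, show m+1+1 = m+2 from rfl]
  exact_mod_cast congrArg (Nat.cast : ℕ → ℝ) H

lemma Aprime (m : ℕ) :
    ((m:ℝ)+2)^3 * T m = ∑ k ∈ Icc 1 (m+1), ((k:ℝ)^3 - k) * uu (m+1) k := by
  rw [T, mul_sum]
  have step1 : ∑ k ∈ Icc 1 m, ((m:ℝ)+2)^3 * uu m k
      = ∑ k ∈ Icc 1 m, ((k:ℝ)*((k:ℝ)+1)*((k:ℝ)+2)) * uu (m+1) (k+1) :=
    sum_congr rfl fun k hk => key_s14 m k (mem_Icc.mp hk).1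
  have step2 : ∑ k ∈ Icc 1 m, ((k:ℝ)*((k:ℝ)+1)*((k:ℝ)+2)) * uu (m+1) (k+1)
      = ∑ j ∈ Icc 2 (m+1), ((j:ℝ)^3 - j) * uu (m+1) j := by
    refine Finset.sum_nbij' (i := fun k => k+1) (j := fun k => k-1) ?_ ?_ ?_ ?_ ?_
    · intro a ha; simp only [mem_Icc] at *; omega
    · intro a ha; simp only [mem_Icc] at *; omega
    · intro a ha; simp only [mem_Icc] at *; omega
    · intro a ha; simp only [mem_Icc] at *; omega
    · intro a ha; push_cast; ring_nf
  have step3 : ∑ j ∈ Icc 1 (m+1), ((j:ℝ)^3 - j) * uu (m+1) j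
      = ∑ j ∈ Icc 2 (m+1), ((j:ℝ)^3 - j) * uu (m+1) j := by
    rw [show Icc 1 (m+1) = insert 1 (Icc 2 (m+1)) by ext x; simp [mem_Icc, mem_insert]; omega,
      sum_insert (by simp)]
    norm_num
  rw [step1, step2, step3]

lemma S1_eq (n : ℕ) :
    2 * ∑ k ∈ Icc 1 n, (k:ℝ) * uu n k = ((n:ℝ)+1) * ∑ k ∈ Icc 1 n, uu n k := by
  have hs := sum_symm n (fun k => (k:ℝ))
  rw [two_mul]
  nth_rewrite 2 [hs]
  rw [← sum_add_distrib, mul_sum]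
  refine sum_congr rfl fun k hk => ?_
  have hm := mem_Icc.mp hk
  rw [Nat.cast_sub (by omega : k ≤ n+1)]
  push_cast
  ring

lemma S3_eq (n : ℕ) :
    2 * ∑ k ∈ Icc 1 n, ((k:ℝ)^3 - k) * uu n k
      = ∑ k ∈ Icc 1 n, ((((n:ℝ)+1)^3 - ((n:ℝ)+1)) + (-(3*((n:ℝ)+1)^2))*(k:ℝ)
          + (3*((n:ℝ)+1))*(k:ℝ)^2) * uu n k := by
  have hs := sum_symm n (fun k => (k:ℝ)^3 - (k:ℝ))
  rw [two_mul]
  nth_rewrite 2 [hs]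
  rw [← sum_add_distrib]
  refine sum_congr rfl fun k hk => ?_
  have hm := mem_Icc.mp hk
  rw [Nat.cast_sub (by omega : k ≤ n+1)]
  push_cast
  ring

lemma split (n : ℕ) (a b c : ℝ) :
    ∑ k ∈ Icc 1 n, (a + b*(k:ℝ) + c*(k:ℝ)^2) * uu n k
      = a * (∑ k ∈ Icc 1 n, uu n k) + b * (∑ k ∈ Icc 1 n, (k:ℝ)*uu n k)
        + c * (∑ k ∈ Icc 1 n, (k:ℝ)^2*uu n k) := by
  rw [mul_sum, mul_sum, mul_sum, ← sum_add_distrib, ← sum_add_distrib]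
  exact sum_congr rfl fun k _ => by ring

lemma master (m : ℕ) :
    6*((m:ℝ)+2) * (∑ k ∈ Icc 1 (m+1), ((k:ℝ)*((k:ℝ)-1)) * uu (m+1) k)
      = 4*(((m:ℝ)+2)^3 * T m) + ((m:ℝ)+2)*((m:ℝ)+1)*(m:ℝ) * T (m+1) := by
  set s : ℝ := (m:ℝ)+2 with hs
  set S0 := ∑ k ∈ Icc 1 (m+1), uu (m+1) k with hS0
  set S1 := ∑ k ∈ Icc 1 (m+1), (k:ℝ)*uu (m+1) k with hS1d
  set S2 := ∑ k ∈ Icc 1 (m+1), (k:ℝ)^2*uu (m+1) k with hS2d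
  have hTn : T (m+1) = S0 := rfl
  have e1 : ∑ k ∈ Icc 1 (m+1), ((k:ℝ)*((k:ℝ)-1)) * uu (m+1) k = S2 - S1 := by
    rw [hS2d, hS1d, ← sum_sub_distrib]
    exact sum_congr rfl fun k _ => by ring
  have hA := Aprime m
  have hS3 := S3_eq (m+1)
  rw [split] at hS3
  have hS1 := S1_eq (m+1)
  have hcast : ((m+1:ℕ):ℝ) = (m:ℝ)+1 := by push_cast; ring
  rw [hcast] at hS3 hS1
  rw [e1, hTn]
  rw [← hS0] at hS3 hS1
  rw [← hS1d] at hS3 hS1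
  rw [← hS2d] at hS3
  -- hA : s^3 * T m = Sig3 ; hS3 : 2*Sig3 = (s³-s)S0 - 3s²S1 + 3sS2 ; hS1 : 2S1 = sS0
  have hs1 : ((m:ℝ)+1)+1 = s := by rw [hs]; ring
  rw [hs1] at hS3 hS1
  simp only [hs] at hS3 hS1 ⊢
  linear_combination (-4)*hA + (-2)*hS3 + (3*((m:ℝ)+2)^2-3*((m:ℝ)+2))*hS1

lemma lower (n : ℕ) :
    ((n:ℝ)^2 - 1)/4 * T n ≤ ∑ k ∈ Icc 1 n, ((k:ℝ)*((k:ℝ)-1)) * uu n k := by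
  have hs := sum_symm n (fun k => (k:ℝ)*((k:ℝ)-1))
  have H : ((n:ℝ)^2-1)/2 * T n ≤ 2 * ∑ k ∈ Icc 1 n, ((k:ℝ)*((k:ℝ)-1)) * uu n k := by
    rw [two_mul]
    nth_rewrite 2 [hs]
    rw [← sum_add_distrib, T, mul_sum]
    refine sum_le_sum fun k hk => ?_
    have hm := mem_Icc.mp hk
    rw [Nat.cast_sub (by omega : k ≤ n+1)]
    push_cast
    nlinarith [sq_nonneg (2*(k:ℝ) - (n:ℝ) - 1), uu_nonneg n k]
  linarith

lemma amgm {w w' M : ℝ} (hw : 0 < w) (hw' : 0 < w') (hM : 0 < M) (hp : w*w' ≤ M^2) :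
    2*(w*w') ≤ M*(w+w') := by
  have h4 : 4*(w*w') ≤ (w+w')^2 := by nlinarith [sq_nonneg (w-w')]
  have hsq : (2*(w*w'))^2 ≤ (M*(w+w'))^2 := by
    nlinarith [mul_le_mul hp h4 (by positivity) (sq_nonneg M)]
  nlinarith [hsq, mul_pos hw hw', mul_pos hM (add_pos hw hw')]

lemma pairing {a b w w' M : ℝ} (ha : 0 ≤ a) (hb : 0 ≤ b) (hw : 0 < w) (hw' : 0 < w')
    (hM : 0 < M) (hp : w*w' ≤ M^2) (hab : w*a = w'*b) : 2*(w*a) ≤ M*(a+b) := by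
  have hgm := amgm hw hw' hM hp
  have h1 : (2*(w*a))*w' ≤ (M*(a+b))*w' := by
    have h2 : a*(2*(w*w')) ≤ a*(M*(w+w')) := mul_le_mul_of_nonneg_left hgm ha
    nlinarith [h2, hab]
  exact le_of_mul_le_mul_right h1 hw'

lemma pointwiseU (m k : ℕ) (hk1 : 1 ≤ k) (hk2 : k ≤ m) :
    16*((m:ℝ)+2)^3 * uu m k
      ≤ ((m:ℝ)+3)^3 * (uu (m+1) (k+1) + uu (m+1) (m+2-k)) := by
  have hkm : (k:ℝ) ≤ (m:ℝ) := by exact_mod_cast hk2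
  have hk1' : (1:ℝ) ≤ (k:ℝ) := by exact_mod_cast hk1
  have f1 : ((m:ℝ)+2)^3 * uu m k
      = ((k:ℝ)*((k:ℝ)+1)*((k:ℝ)+2)) * uu (m+1) (k+1) := key_s14 m k hk1
  have f2 : ((m:ℝ)+2)^3 * uu m k
      = (((m:ℝ)+1-(k:ℝ))*(((m:ℝ)+2-(k:ℝ)))*(((m:ℝ)+3-(k:ℝ)))) * uu (m+1) (m+2-k) := by
    have hsym : uu m k = uu m (m+1-k) := (uu_symm m k hk1 hk2).symm
    have hkey := key_s14 m (m+1-k) (by omega)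
    rw [show m+1-k+1 = m+2-k by omega] at hkey
    rw [hsym, hkey, Nat.cast_sub (by omega : k ≤ m+1)]
    push_cast
    ring
  have hw : 0 < (k:ℝ)*((k:ℝ)+1)*((k:ℝ)+2) := by
    have : 0 < (k:ℝ) := by linarith
    exact mul_pos (mul_pos this (by linarith)) (by linarith)
  have hw' : 0 < ((m:ℝ)+1-(k:ℝ))*(((m:ℝ)+2-(k:ℝ)))*(((m:ℝ)+3-(k:ℝ))) := by
    exact mul_pos (mul_pos (by linarith) (by linarith)) (by linarith)
  have hM : 0 < ((m:ℝ)+3)^3/8 := by positivity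
  have hp : ((k:ℝ)*((k:ℝ)+1)*((k:ℝ)+2)) * (((m:ℝ)+1-(k:ℝ))*(((m:ℝ)+2-(k:ℝ)))*(((m:ℝ)+3-(k:ℝ))))
      ≤ (((m:ℝ)+3)^3/8)^2 := by
    have p1 : (k:ℝ)*((m:ℝ)+3-(k:ℝ)) ≤ (((m:ℝ)+3)/2)^2 := by
      nlinarith [sq_nonneg (2*(k:ℝ) - ((m:ℝ)+3))]
    have p2 : ((k:ℝ)+1)*((m:ℝ)+2-(k:ℝ)) ≤ (((m:ℝ)+3)/2)^2 := by
      nlinarith [sq_nonneg (2*(k:ℝ) - ((m:ℝ)+1))]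
    have p3 : ((k:ℝ)+2)*((m:ℝ)+1-(k:ℝ)) ≤ (((m:ℝ)+3)/2)^2 := by
      nlinarith [sq_nonneg (2*(k:ℝ) - ((m:ℝ)-1))]
    have n2 : 0 ≤ ((k:ℝ)+1)*((m:ℝ)+2-(k:ℝ)) := by nlinarith
    have n3 : 0 ≤ ((k:ℝ)+2)*((m:ℝ)+1-(k:ℝ)) := by nlinarith
    have hc : (0:ℝ) ≤ (((m:ℝ)+3)/2)^2 := by positivity
    calc ((k:ℝ)*((k:ℝ)+1)*((k:ℝ)+2)) * (((m:ℝ)+1-(k:ℝ))*(((m:ℝ)+2-(k:ℝ)))*(((m:ℝ)+3-(k:ℝ))))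
        = ((k:ℝ)*((m:ℝ)+3-(k:ℝ))) * (((k:ℝ)+1)*((m:ℝ)+2-(k:ℝ)))
          * (((k:ℝ)+2)*((m:ℝ)+1-(k:ℝ))) := by ring
      _ ≤ (((m:ℝ)+3)/2)^2 * (((m:ℝ)+3)/2)^2 * (((m:ℝ)+3)/2)^2 := by
          exact mul_le_mul (mul_le_mul p1 p2 n2 hc) p3 n3 (by positivity)
      _ = (((m:ℝ)+3)^3/8)^2 := by ring
  have hab : ((k:ℝ)*((k:ℝ)+1)*((k:ℝ)+2)) * uu (m+1) (k+1)
      = (((m:ℝ)+1-(k:ℝ))*(((m:ℝ)+2-(k:ℝ)))*(((m:ℝ)+3-(k:ℝ)))) * uu (m+1) (m+2-k) := by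
    rw [← f1, ← f2]
  have hmain := pairing (uu_nonneg (m+1) (k+1)) (uu_nonneg (m+1) (m+2-k)) hw hw' hM hp hab
  calc 16*((m:ℝ)+2)^3 * uu m k
      = 8*(2*(((k:ℝ)*((k:ℝ)+1)*((k:ℝ)+2)) * uu (m+1) (k+1))) := by rw [mul_assoc, f1]; ring
    _ ≤ 8*(((m:ℝ)+3)^3/8*(uu (m+1) (k+1) + uu (m+1) (m+2-k))) := by linarith
    _ = ((m:ℝ)+3)^3*(uu (m+1) (k+1) + uu (m+1) (m+2-k)) := by ring

lemma Ubound (m : ℕ) :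
    8*((m:ℝ)+2)^3 * T m ≤ ((m:ℝ)+3)^3 * T (m+1) := by
  have H : ∑ k ∈ Icc 1 m, 16*((m:ℝ)+2)^3 * uu m k
      ≤ ∑ k ∈ Icc 1 m, ((m:ℝ)+3)^3 * (uu (m+1) (k+1) + uu (m+1) (m+2-k)) :=
    sum_le_sum fun k hk => pointwiseU m k (mem_Icc.mp hk).1 (mem_Icc.mp hk).2
  have e1 : ∑ k ∈ Icc 1 m, uu (m+1) (k+1) ≤ T (m+1) := by
    have e : ∑ k ∈ Icc 1 m, uu (m+1) (k+1) = ∑ j ∈ Icc 2 (m+1), uu (m+1) j := by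
      refine Finset.sum_nbij' (i := fun k => k+1) (j := fun k => k-1) ?_ ?_ ?_ ?_ ?_ <;>
        intro a ha <;> simp only [mem_Icc] at * <;> try omega
    rw [e, T]
    apply sum_le_sum_of_subset_of_nonneg
    · intro x hx; simp only [mem_Icc] at *; omega
    · intro i _ _; exact uu_nonneg _ _
  have e2 : ∑ k ∈ Icc 1 m, uu (m+1) (m+2-k) ≤ T (m+1) := by
    have e : ∑ k ∈ Icc 1 m, uu (m+1) (m+2-k) = ∑ j ∈ Icc 2 (m+1), uu (m+1) j := by
      refine Finset.sum_nbij' (i := fun k => m+2-k) (j := fun k => m+2-k) ?_ ?_ ?_ ?_ ?_ <;>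
        intro a ha <;> simp only [mem_Icc] at * <;> try omega
    rw [e, T]
    apply sum_le_sum_of_subset_of_nonneg
    · intro x hx; simp only [mem_Icc] at *; omega
    · intro i _ _; exact uu_nonneg _ _
  have HR : ∑ k ∈ Icc 1 m, ((m:ℝ)+3)^3 * (uu (m+1) (k+1) + uu (m+1) (m+2-k))
      = ((m:ℝ)+3)^3 * ((∑ k ∈ Icc 1 m, uu (m+1) (k+1)) + ∑ k ∈ Icc 1 m, uu (m+1) (m+2-k)) := by
    simp only [mul_add]
    rw [sum_add_distrib, ← mul_sum, ← mul_sum, ← mul_add]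
  rw [HR, ← mul_sum] at H
  have hT : T m = ∑ i ∈ Icc 1 m, uu m i := rfl
  have hnn : (0:ℝ) ≤ ((m:ℝ)+3)^3 := by positivity
  have h2 := mul_le_mul_of_nonneg_left (add_le_add e1 e2) hnn
  rw [hT]
  linarith

lemma ratio_bounds (n : ℕ) (hn : 1 ≤ n) :
    ((n:ℝ)^2-1)/(4*(n:ℝ)^2) ≤ h n / ((n:ℝ)^2 * B n) ∧
    h n / ((n:ℝ)^2 * B n)
      ≤ ((((n:ℝ)+2)^3/2 + ((n:ℝ)+1)*(n:ℝ)*((n:ℝ)-1)) / (6*((n:ℝ)+1))) / (n:ℝ)^2 := by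
  have hn0 : n ≠ 0 := by omega
  have hNpos : (0:ℝ) < (n:ℝ) := by exact_mod_cast Nat.pos_of_ne_zero hn0
  have hTpos : 0 < T n := T_pos n hn
  have hcpos : (0:ℝ) < 2/((n:ℝ)*((n:ℝ)+1)^2) := by positivity
  have hr : h n / ((n:ℝ)^2 * B n)
      = (∑ k ∈ Icc 1 n, ((k:ℝ)*((k:ℝ)-1)) * uu n k) / ((n:ℝ)^2 * T n) := by
    rw [h_eq n hn0, B_eq n hn0,
      show (n:ℝ)^2 * (2/((n:ℝ)*((n:ℝ)+1)^2) * T n)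
        = 2/((n:ℝ)*((n:ℝ)+1)^2) * ((n:ℝ)^2 * T n) by ring,
      mul_div_mul_left _ _ (ne_of_gt hcpos)]
  constructor
  · rw [hr, div_le_div_iff₀ (by positivity) (by positivity)]
    have hlow := lower n
    nlinarith [mul_le_mul_of_nonneg_left hlow (show (0:ℝ) ≤ 4*(n:ℝ)^2 by positivity)]
  · rw [hr]
    obtain ⟨m, rfl⟩ : ∃ m, n = m+1 := ⟨n-1, by omega⟩
    push_cast
    have hm1 := master m
    have hub := Ubound m
    have hQ : (∑ k ∈ Icc 1 (m+1), ((k:ℝ)*((k:ℝ)-1)) * uu (m+1) k)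
        ≤ ((((m:ℝ)+1+2)^3/2 + ((m:ℝ)+1+1)*((m:ℝ)+1)*((m:ℝ)+1-1)) / (6*((m:ℝ)+1+1))) * T (m+1) := by
      rw [div_mul_eq_mul_div, le_div_iff₀ (by positivity : (0:ℝ) < 6*((m:ℝ)+1+1))]
      nlinarith [hm1, hub]
    have hTm1 : (0:ℝ) < T (m+1) := T_pos (m+1) (by omega)
    calc (∑ k ∈ Icc 1 (m+1), ((k:ℝ)*((k:ℝ)-1)) * uu (m+1) k) / (((m:ℝ)+1)^2 * T (m+1))
        ≤ (((((m:ℝ)+1+2)^3/2 + ((m:ℝ)+1+1)*((m:ℝ)+1)*((m:ℝ)+1-1)) / (6*((m:ℝ)+1+1))) * T (m+1))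
            / (((m:ℝ)+1)^2 * T (m+1)) := by
          exact (div_le_div_iff_of_pos_right (by positivity)).mpr hQ
      _ = ((((m:ℝ)+1+2)^3/2 + ((m:ℝ)+1+1)*((m:ℝ)+1)*((m:ℝ)+1-1)) / (6*((m:ℝ)+1+1))) / ((m:ℝ)+1)^2 := by
          rw [mul_comm (((m:ℝ)+1)^2) (T (m+1)), mul_comm _ (T (m+1)), mul_div_mul_left _ _ (ne_of_gt hTm1)]

theorem baxter_second_moment_asymptotic :
    Filter.Tendsto (fun n : ℕ => h n / ((n : ℝ) ^ 2 * B n)) Filter.atTop (nhds (1 / 4)) := by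
  have t0 : Filter.Tendsto (fun n:ℕ => 1/(n:ℝ)) Filter.atTop (nhds 0) :=
    tendsto_one_div_atTop_nhds_zero_nat
  have hLB : Filter.Tendsto (fun n:ℕ => ((n:ℝ)^2-1)/(4*(n:ℝ)^2)) Filter.atTop (nhds (1/4)) := by
    have base : Filter.Tendsto (fun n:ℕ => 1/4 - (1/(n:ℝ))^2/4) Filter.atTop
        (nhds (1/4 - (0:ℝ)^2/4)) :=
      Filter.Tendsto.sub tendsto_const_nhds ((t0.pow 2).div_const 4)
    rw [show (1:ℝ)/4 - (0:ℝ)^2/4 = 1/4 by norm_num] at base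
    refine base.congr' ?_
    filter_upwards [Filter.eventually_ge_atTop 1] with n hn
    have hne : (n:ℝ) ≠ 0 := Nat.cast_ne_zero.mpr (by omega)
    show 1/4 - ((1:ℝ)/(n:ℝ))^2/4 = ((n:ℝ)^2-1)/(4*(n:ℝ)^2)
    rw [div_pow, one_pow, div_div, div_sub_div _ _ (by norm_num) (by positivity),
      div_eq_div_iff (by positivity) (by positivity)]
    ring
  have hUB : Filter.Tendsto
      (fun n:ℕ => ((((n:ℝ)+2)^3/2 + ((n:ℝ)+1)*(n:ℝ)*((n:ℝ)-1)) / (6*((n:ℝ)+1))) / (n:ℝ)^2)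
      Filter.atTop (nhds (1/4)) := by
    have hnum : Filter.Tendsto
        (fun n:ℕ => (1+2*(1/(n:ℝ)))^3/2 + (1+1/(n:ℝ))*(1-1/(n:ℝ))) Filter.atTop
        (nhds ((1+2*(0:ℝ))^3/2 + (1+0)*(1-0))) :=
      Filter.Tendsto.add
        (((tendsto_const_nhds.add (t0.const_mul 2)).pow 3).div_const 2)
        ((tendsto_const_nhds.add t0).mul (tendsto_const_nhds.sub t0))
    have hden : Filter.Tendsto (fun n:ℕ => 6*(1+1/(n:ℝ))) Filter.atTop (nhds (6*(1+(0:ℝ)))) :=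
      (tendsto_const_nhds.add t0).const_mul 6
    have base := hnum.div hden (by norm_num)
    rw [show ((1+2*(0:ℝ))^3/2 + (1+0)*(1-0))/(6*(1+(0:ℝ))) = 1/4 by norm_num] at base
    refine base.congr' ?_
    filter_upwards [Filter.eventually_ge_atTop 1] with n hn
    have hne : (n:ℝ) ≠ 0 := Nat.cast_ne_zero.mpr (by omega)
    have hne1 : (n:ℝ)+1 ≠ 0 := by positivity
    simp only [Pi.div_apply]
    field_simp
  refine tendsto_of_tendsto_of_tendsto_of_le_of_le' hLB hUB ?_ ?_
  · filter_upwards [Filter.eventually_ge_atTop 1] with n hn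
    exact (ratio_bounds n hn).1
  · filter_upwards [Filter.eventually_ge_atTop 1] with n hn
    exact (ratio_bounds n hn).2
end
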